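/- arXiv:2501.12808 — 3 statements merged into one kernel-verified Lean document; each statement's English description precedes it below -/
import Mathlib

section
/- Let G be a unimodular, locally compact second countable, compactly generated group with compact symmetric generating set S, and let μ be a cohomologically adapted probability measure on G whose support is compact. Suppose the drift l(μ) := inf_{n ≥ 1} (1/n) ∫_G |g|_S dμ^{*n}(g) is strictly positive. Let 1 < q ≤ 2 and d > 0, let E be a real Banach space satisfying the (q,d)-uniform smoothness inequality with duality map, let π : G → O(E) be a strongly continuous isometric linear representation and let b ∈ Z¹(G, π) be a μ-harmonic 1-cocycle. Then there exists a constant C > 0, depending only on μ, q and d, such that for every n ≥ 1: inf{‖b(g)‖ : g ∈ G, |g|_S ≥ n} ≤ C · (∫_G ‖b(g)‖^q dμ(g))^{1/q} · n^{1/q}. -/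
open Pointwise
open scoped ENNReal

noncomputable section

/-- The word length of `g` with respect to a generating set `S`:
`|g|_S = min {n : g ∈ Sⁿ}`. -/
def wordLength {G : Type*} [Monoid G] (S : Set G) (g : G) : ℕ :=
  sInf {n : ℕ | g ∈ S ^ n}

/-- The `n`-fold convolution power `μ^{*n}` of a measure on a group
(with `μ^{*0} = δ₁`). -/
def convPow {G : Type*} [Monoid G] [MeasurableSpace G]
    (μ : MeasureTheory.Measure G) : ℕ → MeasureTheory.Measure G
  | 0 => MeasureTheory.Measure.dirac 1
  | n + 1 => MeasureTheory.Measure.map (fun q : G × G => q.1 * q.2)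
      ((convPow μ n).prod μ)

/-- A Borel probability measure `μ` on a locally compact compactly generated group `G`
with compact symmetric generating set `S` is cohomologically adapted if it is symmetric,
absolutely continuous with respect to the Haar measure, its support contains `S`, its
density is essentially bounded below by a positive constant on `S`, and it has finite
`p`-moments for all `1 ≤ p < ∞`. -/
structure CohomologicallyAdapted {G : Type*} [Group G] [TopologicalSpace G]
    [IsTopologicalGroup G] [LocallyCompactSpace G] [MeasurableSpace G] [BorelSpace G]
    (S : Set G) (μ : MeasureTheory.Measure G) : Prop where
  isProb : MeasureTheory.IsProbabilityMeasure μ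
  symmetric : MeasureTheory.Measure.map (fun g => g⁻¹) μ = μ
  absCont : μ.AbsolutelyContinuous MeasureTheory.Measure.haar
  suppContains : ∀ g ∈ S, ∀ U : Set G, IsOpen U → g ∈ U → 0 < μ U
  densityBounded : ∃ ε : ℝ≥0∞, 0 < ε ∧
    ∀ᵐ x ∂((MeasureTheory.Measure.haar : MeasureTheory.Measure G).restrict S),
      ε ≤ μ.rnDeriv MeasureTheory.Measure.haar x
  finiteMoments : ∀ p : ℝ, 1 ≤ p →
    MeasureTheory.Integrable (fun g => (wordLength S g : ℝ) ^ p) μ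

open Classical in
/-- `x^{*_p} = ‖x‖^{p−2}·Jx` for `x ≠ 0`, and `0^{*_p} = 0`. -/
def starMap {E : Type*} [NormedAddCommGroup E] [NormedSpace ℝ E]
    (J : E → StrongDual ℝ E) (p : ℝ) (x : E) : StrongDual ℝ E :=
  if x = 0 then 0 else ‖x‖ ^ (p - 2) • J x

/-- `E` satisfies the `(q,d)`-uniform smoothness inequality with duality map `J`:
`J` is continuous, `⟨x, Jx⟩ = ‖x‖²`, `‖Jx‖ = ‖x‖` and
`‖x+y‖^q ≤ ‖x‖^q + q⟨y, x^{*_q}⟩ + d‖y‖^q`. -/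
structure IsSmoothDualityMap {E : Type*} [NormedAddCommGroup E] [NormedSpace ℝ E]
    (q d : ℝ) (J : E → StrongDual ℝ E) : Prop where
  continuous : Continuous J
  pairing : ∀ x : E, J x x = ‖x‖ ^ 2
  norm_eq : ∀ x : E, ‖J x‖ = ‖x‖
  ineq : ∀ x y : E, ‖x + y‖ ^ q ≤ ‖x‖ ^ q + q * starMap J q x y + d * ‖y‖ ^ q

/- STATEMENT 17: positive drift implies the `n^{1/q}` upper bound on the equivariant
compression of `μ`-harmonic 1-cocycles on `(q,d)`-uniformly smooth Banach spaces. -/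
open MeasureTheory

namespace CompressionAux

variable {G : Type*} [Group G]

lemma wordLength_one (S : Set G) : wordLength S (1 : G) = 0 :=
  Nat.eq_zero_of_le_zero (Nat.sInf_le (by simp [pow_zero, Set.mem_one]))

lemma mem_pow_wordLength {S : Set G} (hSgen : ∀ g : G, ∃ n, g ∈ S ^ n) (g : G) :
    g ∈ S ^ wordLength S g :=
  Nat.sInf_mem (hSgen g)

lemma wordLength_mul_le {S : Set G} (hSgen : ∀ g : G, ∃ n, g ∈ S ^ n) (g h : G) :
    wordLength S (g * h) ≤ wordLength S g + wordLength S h := by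
  apply Nat.sInf_le
  have := Set.mul_mem_mul (mem_pow_wordLength hSgen g) (mem_pow_wordLength hSgen h)
  rw [← pow_add] at this
  exact this

lemma rpow_le_sq_add_one {x q : ℝ} (hx : 0 ≤ x) (hq0 : 0 ≤ q) (hq2 : q ≤ 2) :
    x ^ q ≤ x ^ 2 + 1 := by
  rcases le_total x 1 with h1 | h1
  · have := Real.rpow_le_one hx h1 hq0
    nlinarith [sq_nonneg x]
  · have h2 : x ^ q ≤ x ^ (2 : ℝ) := Real.rpow_le_rpow_of_exponent_le h1 hq2
    rw [show (2:ℝ) = ((2:ℕ):ℝ) by norm_num, Real.rpow_natCast] at h2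
    linarith

variable [TopologicalSpace G] [IsTopologicalGroup G] [SecondCountableTopology G]
  [MeasurableSpace G] [BorelSpace G]

lemma measurable_mul2 : Measurable (fun p : G × G => p.1 * p.2) :=
  continuous_mul.measurable

lemma convPow_isProb (μ : Measure G) [IsProbabilityMeasure μ] :
    ∀ n, IsProbabilityMeasure (convPow μ n)
  | 0 => by unfold convPow; infer_instance
  | n+1 => by
      haveI := convPow_isProb μ n
      unfold convPow
      exact Measure.isProbabilityMeasure_map measurable_mul2.aemeasurable

lemma convPow_one (μ : Measure G) [SFinite μ] : convPow μ 1 = μ := by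
  show Measure.map _ ((Measure.dirac 1).prod μ) = μ
  rw [Measure.dirac_prod, Measure.map_map measurable_mul2 measurable_prodMk_left]
  simp [Function.comp_def]

end CompressionAux

set_option maxHeartbeats 2000000 in
theorem compression_le_rpow_of_positive_drift
    {G : Type*} [Group G] [TopologicalSpace G] [IsTopologicalGroup G]
    [LocallyCompactSpace G] [SecondCountableTopology G]
    [MeasurableSpace G] [BorelSpace G]
    (S : Set G) (hScpt : IsCompact S) (hSsymm : S⁻¹ = S)
    (hSgen : ∀ g : G, ∃ n : ℕ, g ∈ S ^ n)
    (hUni : (MeasureTheory.Measure.haar : MeasureTheory.Measure G).IsMulRightInvariant)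
    (μ : MeasureTheory.Measure G) (hμ : CohomologicallyAdapted S μ)
    (hsupp : ∃ K : Set G, IsCompact K ∧ μ Kᶜ = 0)
    (hdrift : 0 < sInf {x : ℝ | ∃ n : ℕ, 1 ≤ n ∧
      x = (1 / (n : ℝ)) * ∫ g, (wordLength S g : ℝ) ∂(convPow μ n)})
    (q d : ℝ) (hq1 : 1 < q) (hq2 : q ≤ 2) (hd : 0 < d) :
    ∃ C : ℝ, 0 < C ∧
      ∀ (E : Type) [NormedAddCommGroup E] [NormedSpace ℝ E] [CompleteSpace E],
      (∃ J : E → StrongDual ℝ E, IsSmoothDualityMap q d J) →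
      ∀ π : G →* (E ≃ₗᵢ[ℝ] E), (∀ x : E, Continuous fun g : G => π g x) →
      ∀ b : G → E, Continuous b → (∀ g h : G, b (g * h) = b g + π g (b h)) →
      (∫ g, b g ∂μ) = 0 →
      ∀ n : ℕ, 1 ≤ n →
        sInf {r : ℝ | ∃ g : G, n ≤ wordLength S g ∧ r = ‖b g‖}
          ≤ C * (∫ g, ‖b g‖ ^ q ∂μ) ^ (1 / q) * (n : ℝ) ^ (1 / q) := by
  classical
  haveI := hμ.isProb
  have hPn : ∀ n, IsProbabilityMeasure (convPow μ n) := CompressionAux.convPow_isProb μ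
  have hq0 : (0:ℝ) < q := lt_trans one_pos hq1
  set L : G → ℝ := fun g => (wordLength S g : ℝ) with hLdef
  set Λ : G → ℝ≥0∞ := fun g => (wordLength S g : ℝ≥0∞) with hΛdef
  set ℓ : ℝ := sInf {x : ℝ | ∃ n : ℕ, 1 ≤ n ∧
      x = (1 / (n : ℝ)) * ∫ g, (wordLength S g : ℝ) ∂(convPow μ n)} with hldef
  -- drift facts
  have hBdd : BddBelow {x : ℝ | ∃ n : ℕ, 1 ≤ n ∧
      x = (1 / (n : ℝ)) * ∫ g, (wordLength S g : ℝ) ∂(convPow μ n)} := by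
    by_contra h
    rw [hldef, Real.sInf_of_not_bddBelow h] at hdrift
    exact lt_irrefl 0 hdrift
  have hmemD : ∀ n : ℕ, 1 ≤ n → ℓ ≤ (1 / (n:ℝ)) * ∫ g, L g ∂(convPow μ n) :=
    fun n hn => csInf_le hBdd ⟨n, hn, rfl⟩
  have hInt : ∀ n : ℕ, 1 ≤ n → Integrable L (convPow μ n) := by
    intro n hn
    by_contra h
    have h0 := integral_undef h
    have h1 := hmemD n hn
    rw [h0, mul_zero] at h1
    exact absurd (lt_of_lt_of_le hdrift h1) (lt_irrefl 0)
  have hIntL : ∀ n : ℕ, 1 ≤ n → (n:ℝ) * ℓ ≤ ∫ g, L g ∂(convPow μ n) := by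
    intro n hn
    have h1 := hmemD n hn
    have hn0 : (0:ℝ) < n := by exact_mod_cast hn
    have := mul_le_mul_of_nonneg_left h1 hn0.le
    rw [← mul_assoc, mul_one_div, div_self (ne_of_gt hn0), one_mul] at this
    exact this
  have hLnn : ∀ g, 0 ≤ L g := fun g => Nat.cast_nonneg _
  have hΛofL : ∀ g, Λ g = ENNReal.ofReal (L g) := fun g => (ENNReal.ofReal_natCast _).symm
  have hΛae : ∀ n : ℕ, 1 ≤ n → AEMeasurable Λ (convPow μ n) := by
    intro n hn
    have h : AEMeasurable (fun g => ENNReal.ofReal (L g)) (convPow μ n) :=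
      ENNReal.measurable_ofReal.comp_aemeasurable (hInt n hn).aemeasurable
    exact h.congr (Filter.Eventually.of_forall fun g => (hΛofL g).symm)
  have hIntL1 : Integrable L μ := by
    have h := hμ.finiteMoments 1 le_rfl
    simpa [Real.rpow_one] using h
  have hIntL2 : Integrable (fun g => (L g)^2) μ := by
    have h := hμ.finiteMoments 2 one_le_two
    refine h.congr (Filter.Eventually.of_forall fun g => ?_)
    show (wordLength S g : ℝ) ^ (2:ℝ) = _
    rw [show (2:ℝ) = ((2:ℕ):ℝ) by norm_num, Real.rpow_natCast]
  set B1 : ℝ := ∫ g, L g ∂μ with hB1def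
  set A1 : ℝ := ∫ g, (L g)^2 ∂μ with hA1def
  have hB1ℓ : ℓ ≤ B1 := by
    have h := hIntL 1 le_rfl
    rw [CompressionAux.convPow_one μ] at h
    simpa using h
  have hB1pos : 0 < B1 := lt_of_lt_of_le hdrift hB1ℓ
  have hLsq : ∀ g, L g ≤ (L g)^2 := by
    intro g
    have h : (wordLength S g : ℕ) ≤ (wordLength S g)^2 := Nat.le_self_pow two_ne_zero _
    show ((wordLength S g : ℝ)) ≤ ((wordLength S g : ℝ))^2
    exact_mod_cast h
  have hA1B1 : B1 ≤ A1 := integral_mono hIntL1 hIntL2 hLsq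
  have hA1pos : 0 < A1 := lt_of_lt_of_le hB1pos hA1B1
  set C1 : ℝ := A1 + B1^2 with hC1def
  have hC1pos : 0 < C1 := by nlinarith
  set c : ℝ := ℓ^2 / (32 * C1) with hcdef
  have hcpos : 0 < c := div_pos (pow_pos hdrift 2) (by linarith)
  set b1E : ℝ≥0∞ := ENNReal.ofReal B1 with hb1Edef
  set a1E : ℝ≥0∞ := ENNReal.ofReal A1 with ha1Edef
  set c1E : ℝ≥0∞ := ENNReal.ofReal C1 with hc1Edef
  have hΛμae : AEMeasurable Λ μ := by
    have h := hΛae 1 le_rfl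
    rwa [CompressionAux.convPow_one μ] at h
  have hofL2 : ∀ g, ENNReal.ofReal ((L g)^2) = (Λ g)^2 := fun g => by
    rw [ENNReal.ofReal_pow (hLnn g), hΛofL g]
  have hlintΛμ : ∫⁻ g, Λ g ∂μ = b1E := by
    have h : ENNReal.ofReal B1 = ∫⁻ g, ENNReal.ofReal (L g) ∂μ :=
      ofReal_integral_eq_lintegral_ofReal hIntL1 (Filter.Eventually.of_forall hLnn)
    rw [hb1Edef, h]
    exact lintegral_congr fun g => hΛofL g
  have hlintΛ2μ : ∫⁻ g, (Λ g)^2 ∂μ = a1E := by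
    have h : ENNReal.ofReal A1 = ∫⁻ g, ENNReal.ofReal ((L g)^2) ∂μ :=
      ofReal_integral_eq_lintegral_ofReal hIntL2
        (Filter.Eventually.of_forall fun g => sq_nonneg _)
    rw [ha1Edef, h]
    exact lintegral_congr fun g => (hofL2 g).symm
  have hc1E : a1E + b1E^2 = c1E := by
    rw [ha1Edef, hb1Edef, hc1Edef, hC1def, ENNReal.ofReal_add hA1pos.le (sq_nonneg _),
      ENNReal.ofReal_pow hB1pos.le]
  have hmapfst : ∀ n : ℕ, Measure.map Prod.fst ((convPow μ n).prod μ) = convPow μ n := by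
    intro n
    haveI := hPn n
    rw [Measure.map_fst_prod]
    simp
  have hmapsnd : ∀ n : ℕ, Measure.map Prod.snd ((convPow μ n).prod μ) = μ := by
    intro n
    haveI := hPn n
    rw [Measure.map_snd_prod]
    simp
  have hfstae : ∀ n : ℕ, ∀ f : G → ℝ≥0∞, AEMeasurable f (convPow μ n) →
      AEMeasurable (fun p : G × G => f p.1) ((convPow μ n).prod μ) := by
    intro n f hf
    have hf' : AEMeasurable f (Measure.map Prod.fst ((convPow μ n).prod μ)) := by
      rw [hmapfst n]; exact hf
    exact hf'.comp_aemeasurable measurable_fst.aemeasurable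
  have hsndae : ∀ n : ℕ, ∀ f : G → ℝ≥0∞, AEMeasurable f μ →
      AEMeasurable (fun p : G × G => f p.2) ((convPow μ n).prod μ) := by
    intro n f hf
    have hf' : AEMeasurable f (Measure.map Prod.snd ((convPow μ n).prod μ)) := by
      rw [hmapsnd n]; exact hf
    exact hf'.comp_aemeasurable measurable_snd.aemeasurable
  have hfstint : ∀ n : ℕ, ∀ f : G → ℝ≥0∞, AEMeasurable f (convPow μ n) →
      ∫⁻ p : G × G, f p.1 ∂((convPow μ n).prod μ) = ∫⁻ g, f g ∂(convPow μ n) := by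
    intro n f hf
    have hf' : AEMeasurable f (Measure.map Prod.fst ((convPow μ n).prod μ)) := by
      rw [hmapfst n]; exact hf
    rw [← lintegral_map' hf' measurable_fst.aemeasurable, hmapfst n]
  have hsndint : ∀ n : ℕ, ∀ f : G → ℝ≥0∞, AEMeasurable f μ →
      ∫⁻ p : G × G, f p.2 ∂((convPow μ n).prod μ) = ∫⁻ g, f g ∂μ := by
    intro n f hf
    have hf' : AEMeasurable f (Measure.map Prod.snd ((convPow μ n).prod μ)) := by
      rw [hmapsnd n]; exact hf
    rw [← lintegral_map' hf' measurable_snd.aemeasurable, hmapsnd n]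
  have hwlE : ∀ p : G × G, Λ (p.1 * p.2) ≤ Λ p.1 + Λ p.2 := by
    intro p
    have h := CompressionAux.wordLength_mul_le hSgen p.1 p.2
    calc Λ (p.1*p.2) ≤ ((wordLength S p.1 + wordLength S p.2 : ℕ) : ℝ≥0∞) := by
          exact_mod_cast Nat.cast_le.mpr h
      _ = Λ p.1 + Λ p.2 := by push_cast; rfl
  have hconv_succ : ∀ n : ℕ, convPow μ (n+1)
      = Measure.map (fun p : G × G => p.1 * p.2) ((convPow μ n).prod μ) := fun n => rfl
  have hmoment : ∀ n : ℕ, 1 ≤ n →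
      (∫⁻ g, Λ g ∂(convPow μ n)) ≤ (n : ℝ≥0∞) * b1E ∧
      (∫⁻ g, (Λ g)^2 ∂(convPow μ n)) ≤ 2 * (n : ℝ≥0∞)^2 * c1E := by
    intro n hn
    induction n, hn using Nat.le_induction with
    | base =>
      rw [CompressionAux.convPow_one μ, hlintΛμ, hlintΛ2μ]
      constructor
      · simp
      · calc a1E ≤ c1E := by rw [← hc1E]; exact le_self_add
          _ ≤ 2 * ((1:ℕ) : ℝ≥0∞)^2 * c1E := by
              simp only [Nat.cast_one, one_pow, mul_one]
              exact le_mul_of_one_le_left zero_le one_le_two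
    | succ n hn ih =>
      obtain ⟨ihb, iha⟩ := ih
      haveI := hPn n
      have hΛn : AEMeasurable Λ (convPow μ n) := hΛae n hn
      have hΛn1 : AEMeasurable Λ (convPow μ (n+1)) := hΛae (n+1) (by omega)
      have hmul_ae : AEMeasurable (fun p : G × G => p.1*p.2) ((convPow μ n).prod μ) :=
        CompressionAux.measurable_mul2.aemeasurable
      have hΛn1' : AEMeasurable Λ
          (Measure.map (fun p : G × G => p.1*p.2) ((convPow μ n).prod μ)) := by
        rw [← hconv_succ n]; exact hΛn1
      have hx : AEMeasurable (fun p : G × G => Λ p.1) ((convPow μ n).prod μ) := hfstae n Λ hΛn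
      have hy : AEMeasurable (fun p : G × G => Λ p.2) ((convPow μ n).prod μ) := hsndae n Λ hΛμae
      have hb2 : b1E * b1E ≤ c1E := by
        rw [← hc1E, ← sq]; exact le_add_self
      have ha1c : a1E ≤ c1E := by rw [← hc1E]; exact le_self_add
      constructor
      · have e1 : ∫⁻ g, Λ g ∂(convPow μ (n+1))
            = ∫⁻ p : G × G, Λ (p.1*p.2) ∂((convPow μ n).prod μ) := by
          rw [hconv_succ n]; exact lintegral_map' hΛn1' hmul_ae
        rw [e1]
        calc ∫⁻ p : G × G, Λ (p.1*p.2) ∂((convPow μ n).prod μ)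
            ≤ ∫⁻ p : G × G, (Λ p.1 + Λ p.2) ∂((convPow μ n).prod μ) := lintegral_mono hwlE
          _ = (∫⁻ g, Λ g ∂(convPow μ n)) + ∫⁻ g, Λ g ∂μ := by
              rw [lintegral_add_left' hx, hfstint n Λ hΛn, hsndint n Λ hΛμae]
          _ ≤ (n : ℝ≥0∞) * b1E + b1E := by
              rw [hlintΛμ]; exact add_le_add_left ihb _
          _ = ((n+1 : ℕ) : ℝ≥0∞) * b1E := by push_cast; ring
      · have e1 : ∫⁻ g, (Λ g)^2 ∂(convPow μ (n+1))
            = ∫⁻ p : G × G, (Λ (p.1*p.2))^2 ∂((convPow μ n).prod μ) := by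
          rw [hconv_succ n]; exact lintegral_map' (hΛn1'.pow_const 2) hmul_ae
        rw [e1]
        have hexp : ∀ p : G × G,
            (Λ (p.1*p.2))^2 ≤ (Λ p.1)^2 + (2*(Λ p.1 * Λ p.2) + (Λ p.2)^2) := by
          intro p
          calc (Λ (p.1*p.2))^2 ≤ (Λ p.1 + Λ p.2)^2 := pow_le_pow_left₀ zero_le (hwlE p) 2
            _ = (Λ p.1)^2 + (2*(Λ p.1 * Λ p.2) + (Λ p.2)^2) := by ring
        have hcoef : (2*(n:ℝ≥0∞)^2 + (2*(n:ℝ≥0∞) + 1)) ≤ 2*((n:ℝ≥0∞)+1)^2 := by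
          have h : (2*n^2 + (2*n + 1) : ℕ) ≤ 2*(n+1)^2 := by nlinarith
          calc (2*(n:ℝ≥0∞)^2 + (2*(n:ℝ≥0∞) + 1)) = ((2*n^2 + (2*n + 1) : ℕ) : ℝ≥0∞) := by
                push_cast; ring
            _ ≤ ((2*(n+1)^2 : ℕ) : ℝ≥0∞) := Nat.cast_le.mpr h
            _ = 2*((n:ℝ≥0∞)+1)^2 := by push_cast; ring
        calc ∫⁻ p : G × G, (Λ (p.1*p.2))^2 ∂((convPow μ n).prod μ)
            ≤ ∫⁻ p : G × G, ((Λ p.1)^2 + (2*(Λ p.1*Λ p.2) + (Λ p.2)^2))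
                ∂((convPow μ n).prod μ) := lintegral_mono hexp
          _ = (∫⁻ g, (Λ g)^2 ∂(convPow μ n))
              + (2 * ((∫⁻ g, Λ g ∂(convPow μ n)) * b1E) + a1E) := by
              rw [lintegral_add_left' (hx.pow_const 2),
                  lintegral_add_left' (f := fun p : G × G => 2 * (Λ p.1 * Λ p.2)) ((hx.mul hy).const_mul 2),
                  hfstint n _ (hΛn.pow_const 2),
                  hsndint n _ (hΛμae.pow_const 2),
                  lintegral_const_mul' 2 _ (by norm_num),
                  lintegral_prod_mul hΛn hΛμae, hlintΛμ, hlintΛ2μ]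
          _ ≤ 2*(n:ℝ≥0∞)^2*c1E + (2 * (((n:ℝ≥0∞) * b1E) * b1E) + a1E) := by
              refine add_le_add iha (add_le_add ?_ le_rfl)
              exact mul_le_mul_right (mul_le_mul_left ihb _) 2
          _ ≤ 2*(n:ℝ≥0∞)^2*c1E + (2 * ((n:ℝ≥0∞) * c1E) + c1E) := by
              refine add_le_add le_rfl (add_le_add ?_ ha1c)
              rw [mul_assoc]
              exact mul_le_mul_right (mul_le_mul_right hb2 _) 2
          _ = (2*(n:ℝ≥0∞)^2 + (2*(n:ℝ≥0∞) + 1)) * c1E := by ring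
          _ ≤ (2*((n:ℝ≥0∞)+1)^2) * c1E := mul_le_mul_left hcoef c1E
          _ = 2 * ((n+1 : ℕ) : ℝ≥0∞)^2 * c1E := by push_cast; ring
  -- choice of the constant
  set K : ℝ := 2/ℓ + 1 with hKdef
  have hKpos : 0 < K := by
    have h : 0 < 2/ℓ := div_pos two_pos hdrift
    rw [hKdef]; linarith
  set C : ℝ := ((1+d)*K/c) ^ q⁻¹ with hCdef
  have hCpos : 0 < C :=
    Real.rpow_pos_of_pos (div_pos (mul_pos (by linarith) hKpos) hcpos) _
  refine ⟨C, hCpos, ?_⟩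
  intro E _inst1 _inst2 _inst3 hJex π hπcont b hbc hcoc hbzero
  obtain ⟨J, hJ⟩ := hJex
  -- cocycle facts
  have hb1 : b 1 = 0 := by
    have h := hcoc 1 1
    rw [mul_one, map_one] at h
    simp only [LinearIsometryEquiv.coe_one, id_eq] at h
    exact left_eq_add.mp h
  obtain ⟨M0, hM0⟩ := (hScpt.image (continuous_norm.comp hbc)).bddAbove
  set M : ℝ := max M0 0 with hMdef
  have hMnn : 0 ≤ M := le_max_right _ _
  have hMS : ∀ s ∈ S, ‖b s‖ ≤ M := fun s hs =>
    le_trans (hM0 (Set.mem_image_of_mem _ hs)) (le_max_left _ _)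
  have hpow : ∀ k : ℕ, ∀ g ∈ S^k, ‖b g‖ ≤ M * k := by
    intro k
    induction k with
    | zero =>
      intro g hg
      rw [pow_zero, Set.mem_one] at hg
      subst hg
      simp [hb1]
    | succ k ih =>
      intro g hg
      rw [pow_succ, Set.mem_mul] at hg
      obtain ⟨u, hu, v, hv, huv⟩ := hg
      subst huv
      rw [hcoc u v]
      calc ‖b u + (π u) (b v)‖ ≤ ‖b u‖ + ‖(π u) (b v)‖ := norm_add_le _ _
        _ ≤ M * k + M := add_le_add (ih u hu) (by rw [(π u).norm_map]; exact hMS v hv)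
        _ = M * ((k+1 : ℕ) : ℝ) := by push_cast; ring
  have hbM : ∀ g, ‖b g‖ ≤ M * L g := fun g =>
    hpow _ g (CompressionAux.mem_pow_wordLength hSgen g)
  set F : G → ℝ := fun g => ‖b g‖ ^ q with hFdef
  have hFnn : ∀ g, 0 ≤ F g := fun g => Real.rpow_nonneg (norm_nonneg _) q
  have hFc : Continuous F := (hbc.norm).rpow_const (fun x => Or.inr hq0.le)
  have hFsm : StronglyMeasurable F := hFc.stronglyMeasurable
  set Mq : ℝ := M ^ q with hMqdef
  have hMq0 : 0 ≤ Mq := Real.rpow_nonneg hMnn q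
  have hFbound : ∀ g, F g ≤ Mq * ((L g)^2 + 1) := by
    intro g
    calc F g ≤ (M * L g) ^ q := Real.rpow_le_rpow (norm_nonneg _) (hbM g) hq0.le
      _ = Mq * (L g) ^ q := Real.mul_rpow hMnn (hLnn g)
      _ ≤ Mq * ((L g)^2 + 1) :=
          mul_le_mul_of_nonneg_left (CompressionAux.rpow_le_sq_add_one (hLnn g) hq0.le hq2) hMq0
  set I : ℝ := ∫ g, F g ∂μ with hIdef
  have hI0 : 0 ≤ I := integral_nonneg hFnn
  have hbint : Integrable b μ :=
    Integrable.mono' (hIntL1.const_mul M) (hbc.stronglyMeasurable.aestronglyMeasurable)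
      (Filter.Eventually.of_forall hbM)
  have hFμ : Integrable F μ := by
    have hdom : Integrable (fun g => Mq * ((L g)^2 + 1)) μ :=
      ((hIntL2.add (integrable_const 1)).const_mul Mq)
    refine Integrable.mono' hdom hFsm.aestronglyMeasurable
      (Filter.Eventually.of_forall fun g => ?_)
    rw [Real.norm_of_nonneg (hFnn g)]
    exact hFbound g
  have hIntL2n : ∀ n : ℕ, 1 ≤ n → Integrable (fun g => (L g)^2) (convPow μ n) := by
    intro n hn
    haveI := hPn n
    refine ⟨((hInt n hn).aemeasurable.pow_const 2).aestronglyMeasurable, ?_⟩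
    rw [hasFiniteIntegral_iff_norm]
    have he : ∀ g, ENNReal.ofReal ‖(L g)^2‖ = (Λ g)^2 := fun g => by
      rw [Real.norm_of_nonneg (sq_nonneg _)]; exact hofL2 g
    rw [lintegral_congr fun g => he g]
    refine lt_of_le_of_lt (hmoment n hn).2 ?_
    rw [hc1Edef]
    exact (ENNReal.mul_ne_top (ENNReal.mul_ne_top ENNReal.ofNat_ne_top
      (ENNReal.pow_ne_top (ENNReal.natCast_ne_top n))) ENNReal.ofReal_ne_top).lt_top
  have hFintn : ∀ n : ℕ, 1 ≤ n → Integrable F (convPow μ n) := by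
    intro n hn
    haveI := hPn n
    have hdom : Integrable (fun g => Mq * ((L g)^2 + 1)) (convPow μ n) :=
      (((hIntL2n n hn).add (integrable_const 1)).const_mul Mq)
    refine Integrable.mono' hdom hFsm.aestronglyMeasurable
      (Filter.Eventually.of_forall fun g => ?_)
    rw [Real.norm_of_nonneg (hFnn g)]
    exact hFbound g
  have hLsub : ∀ g h : G, L (g*h) ≤ L g + L h := by
    intro g h
    have h2 := CompressionAux.wordLength_mul_le hSgen g h
    show ((wordLength S (g*h) : ℝ)) ≤ ((wordLength S g : ℝ)) + ((wordLength S h : ℝ))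
    exact_mod_cast h2
  have hin : ∀ g : G, ∫ h, F (g*h) ∂μ ≤ F g + d * I := by
    intro g
    set Tg : E →L[ℝ] ℝ :=
      (starMap J q (b g)).comp ((π g).toLinearIsometry.toContinuousLinearMap) with hTgdef
    have hTapp : ∀ y : E, Tg y = (starMap J q (b g)) ((π g) y) := fun y => rfl
    have hptwise : ∀ h : G, F (g*h) ≤ F g + q * Tg (b h) + d * F h := by
      intro h
      have hi := hJ.ineq (b g) ((π g) (b h))
      rw [(π g).norm_map] at hi
      show ‖b (g*h)‖ ^ q ≤ ‖b g‖^q + q * Tg (b h) + d * ‖b h‖^q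
      rw [hcoc g h, hTapp]
      exact hi
    have hTint : Integrable (fun h => Tg (b h)) μ := Tg.integrable_comp hbint
    have hT0 : ∫ h, Tg (b h) ∂μ = 0 := by
      rw [Tg.integral_comp_comm hbint, hbzero, map_zero]
    have hLint : Integrable (fun h => F (g*h)) μ := by
      have hdom : Integrable (fun h => Mq * ((L g + L h)^2 + 1)) μ := by
        have he : (fun h => Mq * ((L g + L h)^2 + 1))
            = fun h => Mq * ((((L g)^2 + 1) + (2 * L g) * L h) + (L h)^2) := by
          funext h; ring
        rw [he]
        exact (((integrable_const _).add (hIntL1.const_mul _)).add hIntL2).const_mul Mq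
      refine Integrable.mono' hdom
        ((hFc.comp (continuous_mul_left g)).stronglyMeasurable.aestronglyMeasurable)
        (Filter.Eventually.of_forall fun h => ?_)
      rw [Real.norm_of_nonneg (hFnn _)]
      calc F (g*h) ≤ Mq * ((L (g*h))^2 + 1) := hFbound _
        _ ≤ Mq * ((L g + L h)^2 + 1) := by
            have h1 := hLsub g h
            have h2 : (L (g*h))^2 ≤ (L g + L h)^2 := by
              nlinarith [hLnn (g*h), hLnn g, hLnn h]
            nlinarith [hMq0]
    have hRint1 : Integrable (fun h => F g + q * Tg (b h)) μ :=
      (integrable_const _).add (hTint.const_mul q)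
    have hRint : Integrable (fun h => F g + q * Tg (b h) + d * F h) μ :=
      hRint1.add (hFμ.const_mul d)
    calc ∫ h, F (g*h) ∂μ ≤ ∫ h, (F g + q * Tg (b h) + d * F h) ∂μ :=
        integral_mono hLint hRint hptwise
      _ = F g + d * I := by
          rw [integral_add hRint1 (hFμ.const_mul d),
            integral_add (integrable_const _) (hTint.const_mul q),
            integral_const, integral_const_mul, integral_const_mul, hT0]
          simp [measure_univ, hIdef]
  have hstep : ∀ n : ℕ, 1 ≤ n →
      ∫ x, F x ∂(convPow μ (n+1)) ≤ (∫ x, F x ∂(convPow μ n)) + d * I := by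
    intro n hn
    haveI := hPn n
    have hpf : MeasurePreserving (Prod.fst : G × G → G) ((convPow μ n).prod μ) (convPow μ n) :=
      ⟨measurable_fst, hmapfst n⟩
    have hps : MeasurePreserving (Prod.snd : G × G → G) ((convPow μ n).prod μ) μ :=
      ⟨measurable_snd, hmapsnd n⟩
    have hL2fst : Integrable (fun p : G × G => (L p.1)^2) ((convPow μ n).prod μ) :=
      (hpf.integrable_comp ((hInt n hn).aemeasurable.pow_const 2).aestronglyMeasurable).mpr
        (hIntL2n n hn)
    have hL2snd : Integrable (fun p : G × G => (L p.2)^2) ((convPow μ n).prod μ) :=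
      (hps.integrable_comp hIntL2.aestronglyMeasurable).mpr hIntL2
    have hcross : Integrable (fun p : G × G => L p.1 * L p.2) ((convPow μ n).prod μ) :=
      (hInt n hn).mul_prod hIntL1
    have hproddom : Integrable (fun p : G × G => Mq * ((L p.1 + L p.2)^2 + 1))
        ((convPow μ n).prod μ) := by
      have he : (fun p : G × G => Mq * ((L p.1 + L p.2)^2 + 1))
          = fun p : G × G => Mq * (((L p.1)^2 + 2 * (L p.1 * L p.2)) + ((L p.2)^2 + 1)) := by
        funext p; ring
      rw [he]
      exact ((hL2fst.add (hcross.const_mul 2)).add (hL2snd.add (integrable_const 1))).const_mul Mq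
    have hprodInt : Integrable (fun p : G × G => F (p.1*p.2)) ((convPow μ n).prod μ) := by
      refine Integrable.mono' hproddom
        ((hFc.comp continuous_mul).stronglyMeasurable.aestronglyMeasurable)
        (Filter.Eventually.of_forall fun p => ?_)
      rw [Real.norm_of_nonneg (hFnn _)]
      calc F (p.1*p.2) ≤ Mq * ((L (p.1*p.2))^2 + 1) := hFbound _
        _ ≤ Mq * ((L p.1 + L p.2)^2 + 1) := by
            have h1 := hLsub p.1 p.2
            have h2 : (L (p.1*p.2))^2 ≤ (L p.1 + L p.2)^2 := by
              nlinarith [hLnn (p.1*p.2), hLnn p.1, hLnn p.2]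
            nlinarith [hMq0]
    have hfub : ∫ x, F x ∂(convPow μ (n+1)) = ∫ g, (∫ h, F (g*h) ∂μ) ∂(convPow μ n) := by
      rw [hconv_succ n,
        integral_map CompressionAux.measurable_mul2.aemeasurable hFsm.aestronglyMeasurable,
        integral_prod _ hprodInt]
    rw [hfub]
    calc ∫ g, (∫ h, F (g*h) ∂μ) ∂(convPow μ n)
        ≤ ∫ g, (F g + d * I) ∂(convPow μ n) :=
          integral_mono hprodInt.integral_prod_left ((hFintn n hn).add (integrable_const _)) hin
      _ = (∫ x, F x ∂(convPow μ n)) + d * I := by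
          rw [integral_add (hFintn n hn) (integrable_const _), integral_const]
          simp [measure_univ]
  have hJgrow : ∀ n : ℕ, 1 ≤ n → ∫ x, F x ∂(convPow μ n) ≤ (1+d) * n * I := by
    intro n hn
    induction n, hn using Nat.le_induction with
    | base =>
      rw [CompressionAux.convPow_one μ]
      have : ∫ x, F x ∂μ = I := hIdef.symm
      rw [this]
      push_cast
      nlinarith [hI0, hd]
    | succ n hn ih =>
      calc ∫ x, F x ∂(convPow μ (n+1)) ≤ (∫ x, F x ∂(convPow μ n)) + d * I := hstep n hn
        _ ≤ (1+d) * n * I + d * I := by linarith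
        _ ≤ (1+d) * ((n+1:ℕ):ℝ) * I := by push_cast; nlinarith [hI0, hd]
  -- endgame
  intro n hn
  show sInf {r : ℝ | ∃ g : G, n ≤ wordLength S g ∧ r = ‖b g‖} ≤ C * I ^ (1/q) * (n : ℝ) ^ (1/q)
  have hn1 : (1:ℝ) ≤ (n:ℝ) := by exact_mod_cast hn
  set N : ℕ := ⌈(2*(n:ℝ))/ℓ⌉₊ with hNdef
  have hNpos : 0 < N := Nat.ceil_pos.mpr (div_pos (by linarith) hdrift)
  have hN1 : 1 ≤ N := hNpos
  have hNR : (0:ℝ) < N := by exact_mod_cast hNpos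
  have hNge : 2*(n:ℝ) ≤ (N:ℝ) * ℓ := by
    have h := Nat.le_ceil ((2*(n:ℝ))/ℓ)
    calc 2*(n:ℝ) = ((2*(n:ℝ))/ℓ)*ℓ := by field_simp
      _ ≤ (N:ℝ)*ℓ := mul_le_mul_of_nonneg_right h hdrift.le
  have hNle : (N:ℝ) ≤ K * n := by
    have h : ((⌈(2*(n:ℝ))/ℓ⌉₊ : ℝ)) < (2*(n:ℝ))/ℓ + 1 :=
      Nat.ceil_lt_add_one (div_nonneg (by linarith) hdrift.le)
    have h2 : 2*(n:ℝ)/ℓ = (2/ℓ)*(n:ℝ) := by ring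
    rw [hKdef, ← hNdef] at *
    nlinarith [h, hn1, div_pos two_pos hdrift]
  haveI := hPn N
  have hΛN := hΛae N hN1
  set Λ' : G → ℝ≥0∞ := hΛN.mk Λ with hΛ'def
  have hΛ'meas : Measurable Λ' := hΛN.measurable_mk
  have hΛ'ae : Λ =ᵐ[convPow μ N] Λ' := hΛN.ae_eq_mk
  set A : Set G := {x | (n:ℝ≥0∞) ≤ Λ' x} with hAdef
  have hAmeas : MeasurableSet A := measurableSet_le measurable_const hΛ'meas
  have hbN : ENNReal.ofReal ((N:ℝ)*ℓ) ≤ ∫⁻ x, Λ' x ∂(convPow μ N) := by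
    rw [← lintegral_congr_ae hΛ'ae]
    have h1 : ENNReal.ofReal ((N:ℝ)*ℓ) ≤ ENNReal.ofReal (∫ g, L g ∂(convPow μ N)) :=
      ENNReal.ofReal_le_ofReal (hIntL N hN1)
    rwa [ofReal_integral_eq_lintegral_ofReal (hInt N hN1) (Filter.Eventually.of_forall hLnn),
      lintegral_congr (fun g => (hΛofL g).symm)] at h1
  have haN : ∫⁻ x, (Λ' x)^2 ∂(convPow μ N) ≤ ENNReal.ofReal (2*(N:ℝ)^2*C1) := by
    have h1 : ∫⁻ x, (Λ' x)^2 ∂(convPow μ N) = ∫⁻ x, (Λ x)^2 ∂(convPow μ N) :=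
      lintegral_congr_ae (hΛ'ae.symm.fun_comp fun y : ℝ≥0∞ => y^2)
    have heq : ENNReal.ofReal (2*(N:ℝ)^2*C1) = 2*(N:ℝ≥0∞)^2*c1E := by
      rw [hc1Edef, ENNReal.ofReal_mul (by positivity), ENNReal.ofReal_mul (by norm_num),
        ENNReal.ofReal_ofNat, ENNReal.ofReal_pow (Nat.cast_nonneg _), ENNReal.ofReal_natCast]
    rw [h1]
    exact le_trans (hmoment N hN1).2 (le_of_eq heq.symm)
  have hNne : (N:ℝ) ≠ 0 := hNR.ne'
  have hC1ne : C1 ≠ 0 := hC1pos.ne'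
  have hlne : ℓ ≠ 0 := hdrift.ne'
  have hTreal_pos : 0 < 8*(N:ℝ)*C1/ℓ :=
    div_pos (mul_pos (mul_pos (by norm_num) hNR) hC1pos) hdrift
  set T : ℝ≥0∞ := ENNReal.ofReal (8*(N:ℝ)*C1/ℓ) with hTdef
  have hT0 : T ≠ 0 := by rw [hTdef]; exact (ENNReal.ofReal_pos.mpr hTreal_pos).ne'
  have hTtop : T ≠ ⊤ := by rw [hTdef]; exact ENNReal.ofReal_ne_top
  have hTpt : ∀ x, Λ' x ≤ T + (Λ' x)^2 / T := by
    intro x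
    rcases le_total (Λ' x) T with h | h
    · exact le_trans h le_self_add
    · refine le_trans ?_ le_add_self
      rw [ENNReal.le_div_iff_mul_le (Or.inl hT0) (Or.inl hTtop), sq]
      exact mul_le_mul_right h _
  have hsplit : (∫⁻ x in A, Λ' x ∂(convPow μ N)) + (∫⁻ x in Aᶜ, Λ' x ∂(convPow μ N))
      = ∫⁻ x, Λ' x ∂(convPow μ N) := lintegral_add_compl Λ' hAmeas
  have hcompl : ∫⁻ x in Aᶜ, Λ' x ∂(convPow μ N) ≤ (n:ℝ≥0∞) := by
    calc ∫⁻ x in Aᶜ, Λ' x ∂(convPow μ N) ≤ ∫⁻ _x in Aᶜ, (n:ℝ≥0∞) ∂(convPow μ N) := by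
          refine setLIntegral_mono_ae aemeasurable_const
            (Filter.Eventually.of_forall fun x hx => ?_)
          have hxA : ¬ (n:ℝ≥0∞) ≤ Λ' x := hx
          exact (not_le.mp hxA).le
      _ = (n:ℝ≥0∞) * (convPow μ N) Aᶜ := setLIntegral_const _ _
      _ ≤ (n:ℝ≥0∞) * 1 := mul_le_mul_right prob_le_one _
      _ = (n:ℝ≥0∞) := mul_one _
  have hA2 : ∫⁻ x in A, Λ' x ∂(convPow μ N)
      ≤ T * (convPow μ N) A + ENNReal.ofReal ((N:ℝ)*ℓ/4) := by
    calc ∫⁻ x in A, Λ' x ∂(convPow μ N)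
        ≤ ∫⁻ x in A, (T + (Λ' x)^2 / T) ∂(convPow μ N) := lintegral_mono fun x => hTpt x
      _ = T * (convPow μ N) A + ∫⁻ x in A, (Λ' x)^2 / T ∂(convPow μ N) := by
          rw [lintegral_add_left' aemeasurable_const, setLIntegral_const]
      _ ≤ T * (convPow μ N) A + ∫⁻ x, (Λ' x)^2 / T ∂(convPow μ N) :=
          add_le_add_right (setLIntegral_le_lintegral _ _) _
      _ ≤ T * (convPow μ N) A + ENNReal.ofReal ((N:ℝ)*ℓ/4) := by
          refine add_le_add_right ?_ _
          have h1 : ∫⁻ x, (Λ' x)^2 / T ∂(convPow μ N)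
              = (∫⁻ x, (Λ' x)^2 ∂(convPow μ N)) / T := by
            simp_rw [div_eq_mul_inv]
            exact lintegral_mul_const'' _ (hΛ'meas.pow_const 2).aemeasurable
          rw [h1]
          calc (∫⁻ x, (Λ' x)^2 ∂(convPow μ N)) / T ≤ ENNReal.ofReal (2*(N:ℝ)^2*C1) / T :=
                ENNReal.div_le_div_right haN _
            _ = ENNReal.ofReal ((2*(N:ℝ)^2*C1) / (8*(N:ℝ)*C1/ℓ)) := by
                rw [hTdef, ← ENNReal.ofReal_div_of_pos hTreal_pos]
            _ = ENNReal.ofReal ((N:ℝ)*ℓ/4) := by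
                congr 1
                field_simp
                ring
  have hNl : (0:ℝ) ≤ (N:ℝ)*ℓ := mul_nonneg hNR.le hdrift.le
  have hmain : ENNReal.ofReal ((N:ℝ)*ℓ/4) ≤ T * (convPow μ N) A := by
    have h0 : ENNReal.ofReal ((N:ℝ)*ℓ)
        ≤ (T * (convPow μ N) A + ENNReal.ofReal ((N:ℝ)*ℓ/4)) + (n:ℝ≥0∞) := by
      calc ENNReal.ofReal ((N:ℝ)*ℓ) ≤ ∫⁻ x, Λ' x ∂(convPow μ N) := hbN
        _ = (∫⁻ x in A, Λ' x ∂(convPow μ N)) + (∫⁻ x in Aᶜ, Λ' x ∂(convPow μ N)) := hsplit.symm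
        _ ≤ (T * (convPow μ N) A + ENNReal.ofReal ((N:ℝ)*ℓ/4)) + (n:ℝ≥0∞) :=
            add_le_add hA2 hcompl
    have hn_le : (n:ℝ≥0∞) ≤ ENNReal.ofReal ((N:ℝ)*ℓ/2) := by
      rw [← ENNReal.ofReal_natCast n]
      exact ENNReal.ofReal_le_ofReal (by linarith)
    have h1 : ENNReal.ofReal ((N:ℝ)*ℓ/4 + (N:ℝ)*ℓ/2) + ENNReal.ofReal ((N:ℝ)*ℓ/4)
        ≤ ENNReal.ofReal ((N:ℝ)*ℓ/4 + (N:ℝ)*ℓ/2) + T * (convPow μ N) A := by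
      have h2 : ENNReal.ofReal ((N:ℝ)*ℓ)
          = ENNReal.ofReal ((N:ℝ)*ℓ/4 + (N:ℝ)*ℓ/2) + ENNReal.ofReal ((N:ℝ)*ℓ/4) := by
        rw [← ENNReal.ofReal_add (by linarith) (by linarith)]
        congr 1
        ring
      rw [← h2]
      calc ENNReal.ofReal ((N:ℝ)*ℓ)
          ≤ (T * (convPow μ N) A + ENNReal.ofReal ((N:ℝ)*ℓ/4)) + (n:ℝ≥0∞) := h0
        _ ≤ (T * (convPow μ N) A + ENNReal.ofReal ((N:ℝ)*ℓ/4))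
            + ENNReal.ofReal ((N:ℝ)*ℓ/2) := add_le_add_right hn_le _
        _ = ENNReal.ofReal ((N:ℝ)*ℓ/4 + (N:ℝ)*ℓ/2) + T * (convPow μ N) A := by
            rw [ENNReal.ofReal_add (by linarith) (by linarith)]
            ring
    exact (ENNReal.add_le_add_iff_left ENNReal.ofReal_ne_top).mp h1
  have hcA : ENNReal.ofReal c ≤ (convPow μ N) A := by
    have h2 : ENNReal.ofReal ((N:ℝ)*ℓ/4) / T ≤ (convPow μ N) A := by
      rw [ENNReal.div_le_iff_le_mul (Or.inl hT0) (Or.inl hTtop),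
        mul_comm ((convPow μ N) A) T]
      exact hmain
    have h3 : ENNReal.ofReal ((N:ℝ)*ℓ/4) / T = ENNReal.ofReal c := by
      rw [hTdef, ← ENNReal.ofReal_div_of_pos hTreal_pos, hcdef]
      congr 1
      field_simp
      ring
    rwa [h3] at h2
  have hbddSet : BddBelow {r : ℝ | ∃ g : G, n ≤ wordLength S g ∧ r = ‖b g‖} := by
    refine ⟨0, fun r hr => ?_⟩
    obtain ⟨g, _, rfl⟩ := hr
    exact norm_nonneg _
  have hkey : ∀ ε : ℝ, 0 < ε →
      sInf {r : ℝ | ∃ g : G, n ≤ wordLength S g ∧ r = ‖b g‖}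
        ≤ (((1+d)*(N:ℝ)*I + ε)/c) ^ q⁻¹ := by
    intro ε hε
    have hXnn : 0 ≤ ((1+d)*(N:ℝ)*I + ε)/c := by
      have h6 : (0:ℝ) ≤ (1+d)*(N:ℝ)*I :=
        mul_nonneg (mul_nonneg (by linarith : (0:ℝ) ≤ 1+d) hNR.le) hI0
      have h7 : (0:ℝ) ≤ (1+d)*(N:ℝ)*I + ε := by linarith
      exact div_nonneg h7 hcpos.le
    set R : ℝ := (((1+d)*(N:ℝ)*I + ε)/c) ^ q⁻¹ with hRdef
    have hR0 : 0 ≤ R := Real.rpow_nonneg hXnn _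
    have hex : ∃ g : G, n ≤ wordLength S g ∧ ‖b g‖ ≤ R := by
      by_contra hno
      push_neg at hno
      have hae2 : ∀ᵐ x ∂((convPow μ N).restrict A),
          ENNReal.ofReal (R^q) ≤ ENNReal.ofReal (F x) := by
        rw [ae_restrict_iff' hAmeas]
        filter_upwards [hΛ'ae] with x hx hxA
        have hwlx : n ≤ wordLength S x := by
          have h4 : (n:ℝ≥0∞) ≤ Λ x := by rw [hx]; exact hxA
          have h5 : (n:ℝ≥0∞) ≤ ((wordLength S x : ℕ) : ℝ≥0∞) := h4
          exact_mod_cast h5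
        have hRlt := hno x hwlx
        exact ENNReal.ofReal_le_ofReal (Real.rpow_le_rpow hR0 hRlt.le hq0.le)
      have hlow : ENNReal.ofReal (R^q) * (convPow μ N) A ≤ ENNReal.ofReal ((1+d)*(N:ℝ)*I) := by
        calc ENNReal.ofReal (R^q) * (convPow μ N) A
            = ∫⁻ _x in A, ENNReal.ofReal (R^q) ∂(convPow μ N) := (setLIntegral_const _ _).symm
          _ ≤ ∫⁻ x in A, ENNReal.ofReal (F x) ∂(convPow μ N) := lintegral_mono_ae hae2
          _ ≤ ∫⁻ x, ENNReal.ofReal (F x) ∂(convPow μ N) := setLIntegral_le_lintegral _ _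
          _ = ENNReal.ofReal (∫ x, F x ∂(convPow μ N)) :=
              (ofReal_integral_eq_lintegral_ofReal (hFintn N hN1)
                (Filter.Eventually.of_forall hFnn)).symm
          _ ≤ ENNReal.ofReal ((1+d)*(N:ℝ)*I) := ENNReal.ofReal_le_ofReal (hJgrow N hN1)
      have hcomb : ENNReal.ofReal (R^q * c) ≤ ENNReal.ofReal ((1+d)*(N:ℝ)*I) := by
        rw [ENNReal.ofReal_mul (Real.rpow_nonneg hR0 q)]
        calc ENNReal.ofReal (R^q) * ENNReal.ofReal c
            ≤ ENNReal.ofReal (R^q) * (convPow μ N) A := mul_le_mul_right hcA _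
          _ ≤ _ := hlow
      have hreal : R^q * c ≤ (1+d)*(N:ℝ)*I :=
        (ENNReal.ofReal_le_ofReal_iff (mul_nonneg (mul_nonneg (by linarith : (0:ℝ) ≤ 1+d) hNR.le) hI0)).mp hcomb
      have hRq : R^q = ((1+d)*(N:ℝ)*I + ε)/c := Real.rpow_inv_rpow hXnn hq0.ne'
      rw [hRq, div_mul_cancel₀ _ hcpos.ne'] at hreal
      linarith
    obtain ⟨g, hg1, hg2⟩ := hex
    exact le_trans (csInf_le hbddSet ⟨g, hg1, rfl⟩) hg2
  have hlim : sInf {r : ℝ | ∃ g : G, n ≤ wordLength S g ∧ r = ‖b g‖}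
      ≤ (((1+d)*(N:ℝ)*I)/c) ^ q⁻¹ := by
    have htend : Filter.Tendsto (fun ε : ℝ => (((1+d)*(N:ℝ)*I + ε)/c) ^ q⁻¹)
        (nhdsWithin 0 (Set.Ioi 0)) (nhds ((((1+d)*(N:ℝ)*I)/c) ^ q⁻¹)) := by
      have h1 : Filter.Tendsto (fun ε : ℝ => ((1+d)*(N:ℝ)*I + ε)/c) (nhds 0)
          (nhds (((1+d)*(N:ℝ)*I)/c)) := by
        have h2 : Continuous (fun ε : ℝ => ((1+d)*(N:ℝ)*I + ε)/c) :=
          (continuous_const.add continuous_id).div_const c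
        have h3 := h2.tendsto 0
        simpa using h3
      have h4 := (Real.continuousAt_rpow_const (((1+d)*(N:ℝ)*I)/c) q⁻¹
        (Or.inr (by positivity))).tendsto
      exact (h4.comp h1).mono_left nhdsWithin_le_nhds
    exact ge_of_tendsto htend (eventually_nhdsWithin_of_forall fun ε hε => hkey ε hε)
  have hbase1 : (0:ℝ) ≤ (1+d)*(N:ℝ)*I :=
    mul_nonneg (mul_nonneg (by linarith : (0:ℝ) ≤ 1+d) hNR.le) hI0
  have hbase2 : (0:ℝ) ≤ (1+d)*K/c := (div_pos (mul_pos (by linarith) hKpos) hcpos).le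
  calc sInf {r : ℝ | ∃ g : G, n ≤ wordLength S g ∧ r = ‖b g‖}
      ≤ (((1+d)*(N:ℝ)*I)/c) ^ q⁻¹ := hlim
    _ ≤ (((1+d)*(K*(n:ℝ))*I)/c) ^ q⁻¹ := by
        refine Real.rpow_le_rpow (div_nonneg hbase1 hcpos.le) ?_ (by positivity)
        refine (div_le_div_iff_of_pos_right hcpos).mpr ?_
        have h5 : (0:ℝ) ≤ (1+d)*I := mul_nonneg (by linarith) hI0
        nlinarith [mul_le_mul_of_nonneg_left hNle h5]
    _ = C * I ^ (1/q) * (n:ℝ) ^ (1/q) := by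
        rw [hCdef, one_div]
        rw [show ((1+d)*(K*(n:ℝ))*I)/c = ((1+d)*K/c) * I * (n:ℝ) by field_simp]
        rw [Real.mul_rpow (mul_nonneg hbase2 hI0) (Nat.cast_nonneg n),
            Real.mul_rpow hbase2 hI0]

end
end

section
/- Let G be a unimodular, locally compact second countable, compactly generated group with compact symmetric generating set S. Suppose there exist a real Hilbert space H, a strongly continuous representation π : G → O(H) by surjective linear isometries and a 1-cocycle b ∈ Z¹(G, π) such that (inf{‖b(g)‖ : g ∈ G, |g|_S = n}) / √n → ∞ as n → ∞ (with the convention that the infimum over the empty set is +∞). Then for every cohomologically adapted probability measure μ on G with compact support, the drift vanishes: inf_{n ≥ 1} (1/n) ∫_G |g|_S dμ^{*n}(g) = 0. -/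
open Pointwise
open scoped ENNReal

noncomputable section

/-- A strongly continuous unitary representation of `G` on a real Hilbert space with a
continuous 1-cocycle whose equivariant compression grows strictly faster than `√n`:
`inf_{|g|_S = n} ‖b(g)‖ / √n → ∞` (with `inf ∅ = +∞`). -/
structure SuperSqrtCocycle (G : Type*) [Group G] [TopologicalSpace G] (S : Set G) where
  H : Type
  [ng : NormedAddCommGroup H]
  [ip : InnerProductSpace ℝ H]
  [cs : CompleteSpace H]
  π : G →* (H ≃ₗᵢ[ℝ] H)
  strongCont : ∀ x : H, Continuous fun g : G => π g x
  b : G → H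
  bCont : Continuous b
  cocycle : ∀ g h : G, b (g * h) = b g + π g (b h)
  fast : ∀ M : ℝ, ∃ N : ℕ, ∀ n : ℕ, N ≤ n → ∀ g : G, wordLength S g = n →
    M * Real.sqrt n ≤ ‖b g‖


namespace DriftAux

open MeasureTheory
open scoped RealInnerProductSpace

set_option linter.unusedSectionVars false
set_option linter.unusedVariables false
set_option maxHeartbeats 1000000

/-! ### Word length -/

section WordLength

variable {G : Type*} [Group G] (S : Set G)

theorem mem_pow_wordLength (hSgen : ∀ g : G, ∃ n : ℕ, g ∈ S ^ n) (g : G) :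
    g ∈ S ^ (wordLength S g) :=
  Nat.sInf_mem (hSgen g)

theorem wordLength_mul_le (hSgen : ∀ g : G, ∃ n : ℕ, g ∈ S ^ n) (x y : G) :
    wordLength S (x * y) ≤ wordLength S x + wordLength S y := by
  apply Nat.sInf_le
  rw [Set.mem_setOf_eq, pow_add]
  exact Set.mul_mem_mul (mem_pow_wordLength S hSgen x) (mem_pow_wordLength S hSgen y)

end WordLength

/-! ### Cocycle basics -/

section Cocycle

variable {G : Type*} [Group G] (S : Set G)
variable {H : Type*} [NormedAddCommGroup H] [InnerProductSpace ℝ H]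
variable (π : G →* (H ≃ₗᵢ[ℝ] H)) (b : G → H)
  (hcoc : ∀ g h : G, b (g * h) = b g + π g (b h))

include hcoc

theorem b_one : b 1 = 0 := by
  have h := hcoc 1 1
  rw [mul_one, map_one] at h
  have h1 : (1 : H ≃ₗᵢ[ℝ] H) (b 1) = b 1 := rfl
  rw [h1] at h
  exact left_eq_add.mp h

theorem b_inv (g : G) : π g⁻¹ (b g) = - b g⁻¹ := by
  have h := hcoc g⁻¹ g
  rw [inv_mul_cancel, b_one π b hcoc] at h
  exact eq_neg_of_add_eq_zero_right h.symm

theorem norm_b_le_of_mem_pow (C : ℝ) (hC0 : 0 ≤ C) (hC : ∀ s ∈ S, ‖b s‖ ≤ C) :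
    ∀ n : ℕ, ∀ g ∈ S ^ n, ‖b g‖ ≤ n * C := by
  intro n
  induction n with
  | zero =>
    intro g hg
    rw [pow_zero, Set.mem_one] at hg
    subst hg
    rw [b_one π b hcoc]
    simp
  | succ m ih =>
    intro g hg
    rw [pow_succ] at hg
    rcases hg with ⟨x, hx, s, hs, rfl⟩
    rw [hcoc x s]
    calc ‖b x + π x (b s)‖ ≤ ‖b x‖ + ‖π x (b s)‖ := norm_add_le _ _
    _ = ‖b x‖ + ‖b s‖ := by rw [(π x).norm_map]
    _ ≤ m * C + C := add_le_add (ih x hx) (hC s hs)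
    _ = (m + 1 : ℕ) * C := by push_cast; ring

theorem norm_b_le (hSgen : ∀ g : G, ∃ n : ℕ, g ∈ S ^ n) (C : ℝ) (hC0 : 0 ≤ C)
    (hC : ∀ s ∈ S, ‖b s‖ ≤ C) (g : G) : ‖b g‖ ≤ (wordLength S g : ℝ) * C :=
  norm_b_le_of_mem_pow S π b hcoc C hC0 hC _ g (mem_pow_wordLength S hSgen g)

end Cocycle

/-! ### Convolution powers -/

theorem mconv_assoc {M : Type*} [Monoid M] [MeasurableSpace M] [MeasurableMul₂ M]
    (μ ν ρ : Measure M) [SFinite μ] [SFinite ν] [SFinite ρ] :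
    (μ ∗ₘ ν) ∗ₘ ρ = μ ∗ₘ (ν ∗ₘ ρ) := by
  have hm : Measurable fun p : M × M => p.1 * p.2 := measurable_mul
  unfold Measure.mconv
  have h1 : (Measure.map (fun p : M × M => p.1 * p.2) (μ.prod ν)).prod ρ
      = Measure.map (Prod.map (fun p : M × M => p.1 * p.2) id) ((μ.prod ν).prod ρ) := by
    conv_lhs => rw [← Measure.map_id (μ := ρ)]
    exact Measure.map_prod_map _ _ hm measurable_id
  have h2 : μ.prod (Measure.map (fun p : M × M => p.1 * p.2) (ν.prod ρ))
      = Measure.map (Prod.map id (fun p : M × M => p.1 * p.2)) (μ.prod (ν.prod ρ)) := by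
    conv_lhs => rw [← Measure.map_id (μ := μ)]
    exact Measure.map_prod_map _ _ measurable_id hm
  rw [h1, h2, ← Measure.prodAssoc_prod,
      Measure.map_map hm (hm.prodMap measurable_id),
      Measure.map_map hm (measurable_id.prodMap hm),
      Measure.map_map (hm.comp (measurable_id.prodMap hm)) MeasurableEquiv.prodAssoc.measurable]
  congr 1
  ext p
  simp [MeasurableEquiv.prodAssoc, mul_assoc]

theorem map_inv_mconv {M : Type*} [Group M] [MeasurableSpace M] [MeasurableMul₂ M]
    [MeasurableInv M] (κ μ : Measure M) [SFinite κ] [SFinite μ] :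
    Measure.map (fun g : M => g⁻¹) (κ ∗ₘ μ)
      = (Measure.map (fun g : M => g⁻¹) μ) ∗ₘ (Measure.map (fun g : M => g⁻¹) κ) := by
  have hm : Measurable fun p : M × M => p.1 * p.2 := measurable_mul
  have hi : Measurable fun g : M => g⁻¹ := measurable_inv
  unfold Measure.mconv
  rw [Measure.map_map hi hm, Measure.map_prod_map _ _ hi hi, ← Measure.prod_swap,
      Measure.map_map (hi.comp hm) measurable_swap,
      Measure.map_map hm (hi.prodMap hi)]
  congr 1
  ext p
  simp [mul_inv_rev]

section ConvPow

variable {G : Type*} [Group G] [MeasurableSpace G] [MeasurableMul₂ G]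
variable (μ : Measure G) [IsProbabilityMeasure μ]

theorem convPow_eq_mconv (n : ℕ) : convPow μ (n + 1) = (convPow μ n) ∗ₘ μ := rfl

theorem convPow_zero : convPow μ 0 = Measure.dirac 1 := rfl

instance convPow_prob (n : ℕ) : IsProbabilityMeasure (convPow μ n) := by
  induction n with
  | zero => rw [convPow_zero]; infer_instance
  | succ m ih => rw [convPow_eq_mconv]; infer_instance

theorem convPow_one : convPow μ 1 = μ := by
  rw [convPow_eq_mconv, convPow_zero]
  exact Measure.dirac_one_mconv μ

theorem mconv_comm_convPow : ∀ n, μ ∗ₘ (convPow μ n) = (convPow μ n) ∗ₘ μ := by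
  intro n
  induction n with
  | zero => rw [convPow_zero, Measure.mconv_dirac_one, Measure.dirac_one_mconv]
  | succ m ih => rw [convPow_eq_mconv, ← mconv_assoc, ih]

theorem convPow_succ' (n : ℕ) : convPow μ (n + 1) = μ ∗ₘ (convPow μ n) := by
  rw [convPow_eq_mconv, mconv_comm_convPow]

variable [MeasurableInv G]

theorem map_inv_convPow (hsym : Measure.map (fun g : G => g⁻¹) μ = μ) :
    ∀ n, Measure.map (fun g : G => g⁻¹) (convPow μ (n + 1)) = convPow μ (n + 1) := by
  intro n
  induction n with
  | zero => rw [convPow_one, hsym]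
  | succ m ih =>
    rw [convPow_eq_mconv μ (m + 1), map_inv_mconv, hsym, ih, ← convPow_succ']
    rfl

end ConvPow

/-! ### Integrals over product measures -/

section ProdInt

variable {α β E : Type*} [MeasurableSpace α] [MeasurableSpace β] [NormedAddCommGroup E]

theorem integrable_comp_fst {ρ : Measure α} (ν : Measure β) [SFinite ρ]
    [IsProbabilityMeasure ν] {f : α → E} (hf : Integrable f ρ) :
    Integrable (fun z : α × β => f z.1) (ρ.prod ν) := by
  have hmap : Measure.map Prod.fst (ρ.prod ν) = ρ := by
    rw [Measure.map_fst_prod]; simp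
  have hf' : AEStronglyMeasurable f (Measure.map Prod.fst (ρ.prod ν)) := by
    rw [hmap]; exact hf.aestronglyMeasurable
  have h := (integrable_map_measure hf' measurable_fst.aemeasurable).mp (by rwa [hmap])
  exact h

theorem integrable_comp_snd (ρ : Measure α) {ν : Measure β} [IsProbabilityMeasure ρ]
    [SFinite ν] {f : β → E} (hf : Integrable f ν) :
    Integrable (fun z : α × β => f z.2) (ρ.prod ν) := by
  have hmap : Measure.map Prod.snd (ρ.prod ν) = ν := by
    rw [Measure.map_snd_prod]; simp
  have hf' : AEStronglyMeasurable f (Measure.map Prod.snd (ρ.prod ν)) := by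
    rw [hmap]; exact hf.aestronglyMeasurable
  have h := (integrable_map_measure hf' measurable_snd.aemeasurable).mp (by rwa [hmap])
  exact h

variable [NormedSpace ℝ E]

theorem integral_comp_fst {ρ : Measure α} (ν : Measure β) [SFinite ρ]
    [IsProbabilityMeasure ν] {f : α → E} (hf : AEStronglyMeasurable f ρ) :
    ∫ z, f z.1 ∂(ρ.prod ν) = ∫ x, f x ∂ρ := by
  have hmap : Measure.map Prod.fst (ρ.prod ν) = ρ := by
    rw [Measure.map_fst_prod]; simp
  have hf' : AEStronglyMeasurable f (Measure.map Prod.fst (ρ.prod ν)) := by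
    rw [hmap]; exact hf
  rw [← integral_map measurable_fst.aemeasurable hf', hmap]

theorem integral_comp_snd (ρ : Measure α) {ν : Measure β} [IsProbabilityMeasure ρ]
    [SFinite ν] {f : β → E} (hf : AEStronglyMeasurable f ν) :
    ∫ z, f z.2 ∂(ρ.prod ν) = ∫ y, f y ∂ν := by
  have hmap : Measure.map Prod.snd (ρ.prod ν) = ν := by
    rw [Measure.map_snd_prod]; simp
  have hf' : AEStronglyMeasurable f (Measure.map Prod.snd (ρ.prod ν)) := by
    rw [hmap]; exact hf
  rw [← integral_map measurable_snd.aemeasurable hf', hmap]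

end ProdInt

/-! ### A positivity lemma for self-adjoint contractions -/

section Op

variable {H : Type*} [NormedAddCommGroup H] [InnerProductSpace ℝ H] [CompleteSpace H]

theorem inner_sum_nonneg (P : H →L[ℝ] H) (hP : ∀ v : H, ‖P v‖ ≤ ‖v‖)
    (hsa : ∀ v w : H, ⟪P v, w⟫ = ⟪v, P w⟫) (β : H) (n : ℕ) :
    0 ≤ ⟪∑ k ∈ Finset.range n, (P ^ k) β, β⟫ := by
  have hpowsa : ∀ k : ℕ, ∀ v w : H, ⟪(P ^ k) v, w⟫ = ⟪v, (P ^ k) w⟫ := by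
    intro k
    induction k with
    | zero => intro v w; simp
    | succ m ih =>
      intro v w
      rw [pow_succ, ContinuousLinearMap.mul_apply, ih, hsa, ← ContinuousLinearMap.mul_apply,
        ← pow_succ', ← pow_succ]
  have c_even : ∀ k : ℕ, ⟪(P ^ (2 * k)) β, β⟫ = ‖(P ^ k) β‖ ^ 2 := by
    intro k
    rw [two_mul, pow_add, ContinuousLinearMap.mul_apply, hpowsa, real_inner_self_eq_norm_sq]
  have c_odd : ∀ k : ℕ, ⟪(P ^ (2 * k + 1)) β, β⟫ = ⟪P ((P ^ k) β), (P ^ k) β⟫ := by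
    intro k
    have h : (2 * k + 1) = k + (1 + k) := by ring
    rw [h, pow_add, pow_add, ContinuousLinearMap.mul_apply, hpowsa,
      ContinuousLinearMap.mul_apply, pow_one]
  have pair : ∀ k : ℕ, 0 ≤ ⟪(P ^ (2 * k)) β, β⟫ + ⟪(P ^ (2 * k + 1)) β, β⟫ := by
    intro k
    rw [c_even, c_odd]
    set u := (P ^ k) β
    have h1 := abs_real_inner_le_norm (P u) u
    have h2 : ‖P u‖ * ‖u‖ ≤ ‖u‖ * ‖u‖ := mul_le_mul_of_nonneg_right (hP u) (norm_nonneg u)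
    have h3 := neg_le_of_abs_le h1
    nlinarith [sq_nonneg ‖u‖]
  rw [sum_inner]
  have key : ∀ m : ℕ, 0 ≤ ∑ k ∈ Finset.range (2 * m), ⟪(P ^ k) β, β⟫ := by
    intro m
    induction m with
    | zero => simp
    | succ j ih =>
      have h : 2 * (j + 1) = (2 * j) + 1 + 1 := by ring
      rw [h, Finset.sum_range_succ, Finset.sum_range_succ]
      have := pair j
      linarith
  rcases Nat.even_or_odd n with ⟨m, hm⟩ | ⟨m, hm⟩
  · subst hm; simpa [two_mul] using key m
  · subst hm
    rw [Finset.sum_range_succ]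
    have h1 := key m
    have h2 : (0:ℝ) ≤ ⟪(P ^ (2 * m)) β, β⟫ := by rw [c_even]; positivity
    linarith

end Op

end DriftAux

namespace DriftAux

open MeasureTheory
open scoped RealInnerProductSpace

set_option linter.unusedSectionVars false
set_option linter.unusedVariables false
set_option maxHeartbeats 1000000

section Rep

variable {G : Type*} [Group G] [TopologicalSpace G] [IsTopologicalGroup G]
  [SecondCountableTopology G] [MeasurableSpace G] [BorelSpace G]
variable {H : Type*} [NormedAddCommGroup H] [InnerProductSpace ℝ H] [CompleteSpace H]

theorem continuous_pi2 (π : G →* (H ≃ₗᵢ[ℝ] H)) (hπc : ∀ v : H, Continuous fun g : G => π g v) :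
    Continuous fun p : G × H => π p.1 p.2 := by
  rw [continuous_iff_continuousAt]
  rintro ⟨g₀, v₀⟩
  rw [ContinuousAt, tendsto_iff_dist_tendsto_zero]
  have hb : ∀ p : G × H, dist (π p.1 p.2) (π g₀ v₀) ≤ dist p.2 v₀ + dist (π p.1 v₀) (π g₀ v₀) := by
    intro p
    calc dist (π p.1 p.2) (π g₀ v₀)
        ≤ dist (π p.1 p.2) (π p.1 v₀) + dist (π p.1 v₀) (π g₀ v₀) := dist_triangle _ _ _
    _ = dist p.2 v₀ + dist (π p.1 v₀) (π g₀ v₀) := by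
        rw [(π p.1).isometry.dist_eq]
  have hg : Filter.Tendsto (fun p : G × H => dist p.2 v₀ + dist (π p.1 v₀) (π g₀ v₀))
      (nhds (g₀, v₀)) (nhds 0) := by
    have hcont : Continuous fun p : G × H => dist p.2 v₀ + dist (π p.1 v₀) (π g₀ v₀) :=
      (continuous_snd.dist continuous_const).add
        (((hπc v₀).comp continuous_fst).dist continuous_const)
    have h0 := hcont.tendsto (g₀, v₀)
    simpa using h0
  exact squeeze_zero (fun p => dist_nonneg) hb hg

theorem integrable_pi (π : G →* (H ≃ₗᵢ[ℝ] H)) (hπc : ∀ v : H, Continuous fun g : G => π g v)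
    (v : H) (ν : Measure G) [IsProbabilityMeasure ν] :
    Integrable (fun g : G => π g v) ν := by
  refine Integrable.mono' (integrable_const ‖v‖) ((hπc v).aestronglyMeasurable) ?_
  filter_upwards with g
  rw [(π g).norm_map]

def Pop (π : G →* (H ≃ₗᵢ[ℝ] H)) (hπc : ∀ v : H, Continuous fun g : G => π g v)
    (μ : Measure G) [IsProbabilityMeasure μ] : H →L[ℝ] H :=
  LinearMap.mkContinuous
    { toFun := fun v => ∫ g, π g v ∂μ
      map_add' := fun v w => by
        simp_rw [map_add]
        exact integral_add (integrable_pi π hπc v μ) (integrable_pi π hπc w μ)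
      map_smul' := fun c v => by
        simp_rw [_root_.map_smul]
        exact integral_smul c _ }
    1 (fun v => by
      simp only [LinearMap.coe_mk, AddHom.coe_mk, one_mul]
      calc ‖∫ g, π g v ∂μ‖ ≤ ∫ g, ‖π g v‖ ∂μ := norm_integral_le_integral_norm _
      _ = ∫ g, ‖v‖ ∂μ := by simp_rw [(fun g : G => (π g).norm_map v : ∀ g : G, ‖π g v‖ = ‖v‖)]
      _ = ‖v‖ := by simp)

variable (π : G →* (H ≃ₗᵢ[ℝ] H)) (hπc : ∀ v : H, Continuous fun g : G => π g v)
    (μ : Measure G) [IsProbabilityMeasure μ]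

theorem Pop_apply (v : H) : Pop π hπc μ v = ∫ g, π g v ∂μ := rfl

theorem Pop_norm (v : H) : ‖Pop π hπc μ v‖ ≤ ‖v‖ := by
  rw [Pop_apply]
  calc ‖∫ g, π g v ∂μ‖ ≤ ∫ g, ‖π g v‖ ∂μ := norm_integral_le_integral_norm _
  _ = ∫ g, ‖v‖ ∂μ := by simp_rw [(fun g : G => (π g).norm_map v : ∀ g : G, ‖π g v‖ = ‖v‖)]
  _ = ‖v‖ := by simp

theorem pi_inv_apply (g : G) (v : H) : π g⁻¹ (π g v) = v := by
  have h : π g⁻¹ * π g = 1 := by rw [← map_mul, inv_mul_cancel, map_one]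
  calc π g⁻¹ (π g v) = (π g⁻¹ * π g) v := rfl
  _ = v := by rw [h]; rfl

theorem Pop_selfAdjoint (hsym : Measure.map (fun g : G => g⁻¹) μ = μ) (v w : H) :
    ⟪Pop π hπc μ v, w⟫ = ⟪v, Pop π hπc μ w⟫ := by
  have h1 : ⟪Pop π hπc μ v, w⟫ = ∫ g, ⟪w, π g v⟫ ∂μ := by
    rw [real_inner_comm, Pop_apply, integral_inner (integrable_pi π hπc v μ) w]
  have h2 : ∀ g : G, ⟪w, π g v⟫ = ⟪v, π g⁻¹ w⟫ := by
    intro g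
    calc ⟪w, π g v⟫ = ⟪π g⁻¹ w, π g⁻¹ (π g v)⟫ := ((π g⁻¹).inner_map_map w (π g v)).symm
    _ = ⟪π g⁻¹ w, v⟫ := by rw [pi_inv_apply]
    _ = ⟪v, π g⁻¹ w⟫ := real_inner_comm _ _
  have h3 : ∫ g, ⟪w, π g v⟫ ∂μ = ∫ g, ⟪v, π g⁻¹ w⟫ ∂μ := by
    simp_rw [h2]
  have h4 : ∫ g, ⟪v, π g⁻¹ w⟫ ∂μ = ∫ g, ⟪v, π g w⟫ ∂μ := by
    conv_rhs => rw [← hsym]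
    rw [integral_map measurable_inv.aemeasurable]
    exact (continuous_const.inner (hπc w)).aestronglyMeasurable
  rw [h1, h3, h4, integral_inner (integrable_pi π hπc w μ) v, Pop_apply]

theorem integral_pi_convPow :
    ∀ n : ℕ, ∀ v : H, ∫ g, π g v ∂(convPow μ (n + 1)) = ((Pop π hπc μ) ^ (n + 1)) v := by
  intro n
  induction n with
  | zero => intro v; rw [convPow_one, pow_one, Pop_apply]
  | succ m ih =>
    intro v
    have hmul : Measurable fun q : G × G => q.1 * q.2 := measurable_mul
    have hstep : convPow μ (m + 2)
        = Measure.map (fun q : G × G => q.1 * q.2) ((convPow μ (m + 1)).prod μ) := rfl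
    rw [hstep, integral_map hmul.aemeasurable (hπc v).aestronglyMeasurable]
    have hpt : ∀ z : G × G, π (z.1 * z.2) v = π z.1 (π z.2 v) := by
      intro z
      rw [map_mul]
      rfl
    simp_rw [hpt]
    have hint : Integrable (fun z : G × G => π z.1 (π z.2 v)) ((convPow μ (m + 1)).prod μ) := by
      refine Integrable.mono' (integrable_const ‖v‖) ?_ ?_
      · have hc : Continuous fun z : G × G => π z.1 (π z.2 v) :=
          (continuous_pi2 π hπc).comp
            (continuous_fst.prodMk ((hπc v).comp continuous_snd))
        exact hc.aestronglyMeasurable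
      · filter_upwards with z
        rw [(π z.1).norm_map, (π z.2).norm_map]
    rw [integral_prod _ hint]
    have hin : ∀ x : G, ∫ y, π x (π y v) ∂μ = π x (Pop π hπc μ v) := by
      intro x
      rw [Pop_apply]
      exact (π x).toLinearIsometry.integral_comp_comm (fun y => π y v)
    simp_rw [hin]
    rw [ih (Pop π hπc μ v), ← ContinuousLinearMap.mul_apply, ← pow_succ]

variable (b : G → H) (hbc : Continuous b)
  (hcoc : ∀ g h : G, b (g * h) = b g + π g (b h))

include hπc hbc hcoc

theorem beta_formula (hb : ∀ m : ℕ, Integrable b (convPow μ (m + 1))) :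
    ∀ k : ℕ, ∫ g, b g ∂(convPow μ (k + 1))
      = ∑ j ∈ Finset.range (k + 1), ((Pop π hπc μ) ^ j) (∫ g, b g ∂μ) := by
  have hb1 : Integrable b μ := by rw [← convPow_one μ]; exact hb 0
  intro k
  induction k with
  | zero =>
    rw [convPow_one]
    simp
  | succ m ih =>
    have hmul : Measurable fun q : G × G => q.1 * q.2 := measurable_mul
    have hstep : convPow μ (m + 2)
        = Measure.map (fun q : G × G => q.1 * q.2) ((convPow μ (m + 1)).prod μ) := rfl
    rw [hstep, integral_map hmul.aemeasurable hbc.aestronglyMeasurable]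
    have hprodint : Integrable (fun z : G × G => b (z.1 * z.2)) ((convPow μ (m + 1)).prod μ) := by
      have h := (integrable_map_measure hbc.aestronglyMeasurable hmul.aemeasurable).mp
        (by rw [← hstep]; exact hb (m + 1))
      exact h
    rw [integral_prod _ hprodint]
    have hin : ∀ x : G, ∫ y, b (x * y) ∂μ = b x + π x (∫ g, b g ∂μ) := by
      intro x
      simp_rw [hcoc x]
      have hint : Integrable (fun y : G => π x (b y)) μ := by
        exact ((π x).toLinearIsometry.toContinuousLinearMap).integrable_comp hb1
      rw [integral_add (integrable_const (b x)) hint]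
      congr 1
      · simp
      · exact (π x).toLinearIsometry.integral_comp_comm b
    simp_rw [hin]
    rw [integral_add (hb m) (integrable_pi π hπc _ _), ih,
      integral_pi_convPow π hπc μ m (∫ g, b g ∂μ)]
    conv_rhs => rw [Finset.sum_range_succ]

theorem inner_beta_nonneg (hsym : Measure.map (fun g : G => g⁻¹) μ = μ)
    (hb : ∀ m : ℕ, Integrable b (convPow μ (m + 1))) (k : ℕ) :
    0 ≤ ⟪∫ g, b g ∂(convPow μ (k + 1)), ∫ g, b g ∂μ⟫ := by
  rw [beta_formula π hπc μ b hbc hcoc hb k]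
  exact inner_sum_nonneg (Pop π hπc μ) (Pop_norm π hπc μ)
    (Pop_selfAdjoint π hπc μ hsym) _ _

theorem psi_succ_le (hsym : Measure.map (fun g : G => g⁻¹) μ = μ)
    (hb : ∀ m : ℕ, Integrable b (convPow μ (m + 1)))
    (hb2 : ∀ m : ℕ, Integrable (fun g => ‖b g‖ ^ 2) (convPow μ (m + 1))) (k : ℕ) :
    ∫ g, ‖b g‖ ^ 2 ∂(convPow μ (k + 2))
      ≤ ∫ g, ‖b g‖ ^ 2 ∂(convPow μ (k + 1)) + ∫ g, ‖b g‖ ^ 2 ∂μ := by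
  have hb1 : Integrable b μ := by rw [← convPow_one μ]; exact hb 0
  have hb21 : Integrable (fun g => ‖b g‖ ^ 2) μ := by rw [← convPow_one μ]; exact hb2 0
  have hmul : Measurable fun q : G × G => q.1 * q.2 := measurable_mul
  set ρ := convPow μ (k + 1) with hρ
  set β : H := ∫ g, b g ∂μ with hβdef
  have hstep : convPow μ (k + 2)
      = Measure.map (fun q : G × G => q.1 * q.2) (ρ.prod μ) := rfl
  have hsq : Continuous fun g : G => ‖b g‖ ^ 2 := (hbc.norm).pow 2
  have step1 : ∫ g, ‖b g‖ ^ 2 ∂(convPow μ (k + 2))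
      = ∫ z : G × G, ‖b (z.1 * z.2)‖ ^ 2 ∂(ρ.prod μ) := by
    rw [hstep, integral_map hmul.aemeasurable hsq.aestronglyMeasurable]
  have hpt : ∀ z : G × G, ‖b (z.1 * z.2)‖ ^ 2
      = ‖b z.1‖ ^ 2 + 2 * ⟪b z.1, π z.1 (b z.2)⟫ + ‖b z.2‖ ^ 2 := by
    intro z
    rw [hcoc z.1 z.2, norm_add_sq_real, (π z.1).norm_map]
  have hcrosscont : Continuous fun z : G × G => ⟪b z.1, π z.1 (b z.2)⟫ := by
    have h1 : Continuous fun z : G × G => π z.1 (b z.2) :=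
      (continuous_pi2 π hπc).comp (continuous_fst.prodMk (hbc.comp continuous_snd))
    exact (hbc.comp continuous_fst).inner h1
  have I1 : Integrable (fun z : G × G => ‖b z.1‖ ^ 2) (ρ.prod μ) :=
    integrable_comp_fst μ (hb2 k)
  have I3 : Integrable (fun z : G × G => ‖b z.2‖ ^ 2) (ρ.prod μ) :=
    integrable_comp_snd ρ hb21
  have I2 : Integrable (fun z : G × G => ⟪b z.1, π z.1 (b z.2)⟫) (ρ.prod μ) := by
    refine Integrable.mono' ((hb k).norm.mul_prod hb1.norm) hcrosscont.aestronglyMeasurable ?_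
    filter_upwards with z
    rw [Real.norm_eq_abs]
    calc |⟪b z.1, π z.1 (b z.2)⟫| ≤ ‖b z.1‖ * ‖π z.1 (b z.2)‖ := abs_real_inner_le_norm _ _
    _ = ‖b z.1‖ * ‖b z.2‖ := by rw [(π z.1).norm_map]
  have step2 : ∫ z : G × G, ‖b (z.1 * z.2)‖ ^ 2 ∂(ρ.prod μ)
      = (∫ z : G × G, ‖b z.1‖ ^ 2 ∂(ρ.prod μ))
        + 2 * (∫ z : G × G, ⟪b z.1, π z.1 (b z.2)⟫ ∂(ρ.prod μ))
        + ∫ z : G × G, ‖b z.2‖ ^ 2 ∂(ρ.prod μ) := by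
    have I2' : Integrable (fun z : G × G => 2 * ⟪b z.1, π z.1 (b z.2)⟫) (ρ.prod μ) := by
      exact I2.const_mul 2
    have I12 : Integrable (fun z : G × G => ‖b z.1‖ ^ 2 + 2 * ⟪b z.1, π z.1 (b z.2)⟫)
        (ρ.prod μ) := by
      exact I1.add I2'
    simp_rw [hpt]
    rw [integral_add I12 I3, integral_add I1 I2', integral_const_mul]
  have step3 : ∫ z : G × G, ‖b z.1‖ ^ 2 ∂(ρ.prod μ) = ∫ g, ‖b g‖ ^ 2 ∂ρ :=
    integral_comp_fst μ hsq.aestronglyMeasurable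
  have step4 : ∫ z : G × G, ‖b z.2‖ ^ 2 ∂(ρ.prod μ) = ∫ g, ‖b g‖ ^ 2 ∂μ :=
    integral_comp_snd ρ hsq.aestronglyMeasurable
  have step5 : ∫ z : G × G, ⟪b z.1, π z.1 (b z.2)⟫ ∂(ρ.prod μ)
      = - ⟪∫ g, b g ∂ρ, β⟫ := by
    rw [integral_prod _ I2]
    have hin : ∀ x : G, ∫ y, ⟪b x, π x (b y)⟫ ∂μ = ⟪b x, π x β⟫ := by
      intro x
      have hint : Integrable (fun y : G => π x (b y)) μ :=
        ((π x).toLinearIsometry.toContinuousLinearMap).integrable_comp hb1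
      rw [integral_inner hint (b x)]
      congr 1
      exact (π x).toLinearIsometry.integral_comp_comm b
    simp_rw [hin]
    have hin2 : ∀ x : G, ⟪b x, π x β⟫ = - ⟪b x⁻¹, β⟫ := by
      intro x
      calc ⟪b x, π x β⟫ = ⟪π x⁻¹ (b x), π x⁻¹ (π x β)⟫ :=
        ((π x⁻¹).inner_map_map (b x) (π x β)).symm
      _ = ⟪π x⁻¹ (b x), β⟫ := by rw [pi_inv_apply]
      _ = - ⟪b x⁻¹, β⟫ := by rw [b_inv π b hcoc x, inner_neg_left]
    simp_rw [hin2]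
    rw [integral_neg]
    congr 1
    have hswap : ∫ x, ⟪b x⁻¹, β⟫ ∂ρ = ∫ x, ⟪b x, β⟫ ∂ρ := by
      conv_rhs => rw [hρ, ← map_inv_convPow μ hsym k]
      rw [integral_map measurable_inv.aemeasurable]
      exact ((hbc.inner continuous_const)).aestronglyMeasurable
    rw [hswap]
    have : ∫ x, ⟪b x, β⟫ ∂ρ = ⟪∫ g, b g ∂ρ, β⟫ := by
      rw [show (fun x : G => ⟪b x, β⟫) = fun x : G => ⟪β, b x⟫ from
        funext fun x => real_inner_comm _ _]
      rw [integral_inner (hb k) β]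
      exact real_inner_comm _ _
    rw [this]
  have hβpos : 0 ≤ ⟪∫ g, b g ∂ρ, β⟫ :=
    inner_beta_nonneg π hπc μ b hbc hcoc hsym hb k
  rw [step1, step2, step3, step4, step5]
  linarith

theorem psi_bound (hsym : Measure.map (fun g : G => g⁻¹) μ = μ)
    (hb : ∀ m : ℕ, Integrable b (convPow μ (m + 1)))
    (hb2 : ∀ m : ℕ, Integrable (fun g => ‖b g‖ ^ 2) (convPow μ (m + 1))) :
    ∀ k : ℕ, ∫ g, ‖b g‖ ^ 2 ∂(convPow μ (k + 1)) ≤ (k + 1 : ℝ) * ∫ g, ‖b g‖ ^ 2 ∂μ := by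
  intro k
  induction k with
  | zero => rw [convPow_one]; simp
  | succ m ih =>
    have h := psi_succ_le π hπc μ b hbc hcoc hsym hb hb2 m
    have hψ1 : 0 ≤ ∫ g, ‖b g‖ ^ 2 ∂μ := integral_nonneg fun g => by positivity
    have : (m + 1 + 1 : ℝ) * ∫ g, ‖b g‖ ^ 2 ∂μ
        = (m + 1 : ℝ) * (∫ g, ‖b g‖ ^ 2 ∂μ) + ∫ g, ‖b g‖ ^ 2 ∂μ := by ring
    push_cast
    push_cast at ih
    linarith

end Rep

end DriftAux

namespace DriftAux

open Pointwise MeasureTheory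

set_option linter.unusedSectionVars false
set_option linter.unusedVariables false
set_option maxHeartbeats 1000000

section WLInt

variable {G : Type*} [Group G] [MeasurableSpace G] [MeasurableMul₂ G] (S : Set G)
variable (μ : Measure G) [IsProbabilityMeasure μ]

theorem integrable_wl_sq (hSgen : ∀ g : G, ∃ n : ℕ, g ∈ S ^ n)
    (hA : ∀ m : ℕ, Integrable (fun g => (wordLength S g : ℝ)) (convPow μ (m + 1)))
    (h2 : Integrable (fun g => (wordLength S g : ℝ) ^ 2) μ) :
    ∀ m : ℕ, Integrable (fun g => (wordLength S g : ℝ) ^ 2) (convPow μ (m + 1)) := by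
  have h1 : Integrable (fun g => (wordLength S g : ℝ)) μ := by
    rw [← convPow_one μ]; exact hA 0
  intro m
  induction m with
  | zero => rw [convPow_one]; exact h2
  | succ m ih =>
    have hmul : Measurable fun q : G × G => q.1 * q.2 := measurable_mul
    have hstep : convPow μ (m + 2)
        = Measure.map (fun q : G × G => q.1 * q.2) ((convPow μ (m + 1)).prod μ) := rfl
    have hwlA : AEStronglyMeasurable (fun g => (wordLength S g : ℝ)) (convPow μ (m + 2)) :=
      (hA (m + 1)).aestronglyMeasurable
    have hsqA : AEStronglyMeasurable (fun g => (wordLength S g : ℝ) ^ 2) (convPow μ (m + 2)) := by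
      have h := hwlA.mul hwlA
      rw [show (fun g => (wordLength S g : ℝ) ^ 2)
        = fun g => (wordLength S g : ℝ) * (wordLength S g : ℝ) from funext fun g => sq _]
      exact h
    rw [hstep, integrable_map_measure (by rw [← hstep]; exact hsqA) hmul.aemeasurable]
    have hcompA : AEStronglyMeasurable
        ((fun g => (wordLength S g : ℝ) ^ 2) ∘ (fun q : G × G => q.1 * q.2))
        ((convPow μ (m + 1)).prod μ) := by
      refine AEStronglyMeasurable.comp_measurable ?_ hmul
      rw [← hstep]; exact hsqA
    have e1 : Integrable (fun z : G × G => (wordLength S z.1 : ℝ) ^ 2)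
        ((convPow μ (m + 1)).prod μ) := integrable_comp_fst μ ih
    have e2 : Integrable (fun z : G × G => (wordLength S z.2 : ℝ) ^ 2)
        ((convPow μ (m + 1)).prod μ) := integrable_comp_snd _ h2
    have e3 : Integrable (fun z : G × G => (wordLength S z.1 : ℝ) * (wordLength S z.2 : ℝ))
        ((convPow μ (m + 1)).prod μ) := (hA m).mul_prod h1
    have hbound : Integrable
        (fun z : G × G => ((wordLength S z.1 : ℝ) + (wordLength S z.2 : ℝ)) ^ 2)
        ((convPow μ (m + 1)).prod μ) := by
      have h := (e1.add (e3.const_mul 2)).add e2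
      rw [show (fun z : G × G => ((wordLength S z.1 : ℝ) + (wordLength S z.2 : ℝ)) ^ 2)
        = fun z : G × G => ((wordLength S z.1 : ℝ) ^ 2
            + 2 * ((wordLength S z.1 : ℝ) * (wordLength S z.2 : ℝ)))
            + (wordLength S z.2 : ℝ) ^ 2 from funext fun z => by ring]
      exact h
    refine Integrable.mono' hbound hcompA ?_
    filter_upwards with z
    have hle : (wordLength S (z.1 * z.2) : ℝ)
        ≤ (wordLength S z.1 : ℝ) + (wordLength S z.2 : ℝ) := by
      have := wordLength_mul_le S hSgen z.1 z.2
      exact_mod_cast this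
    have h0 : (0:ℝ) ≤ (wordLength S (z.1 * z.2) : ℝ) := Nat.cast_nonneg _
    rw [Function.comp_apply, Real.norm_eq_abs, abs_of_nonneg (by positivity)]
    exact pow_le_pow_left₀ h0 hle 2

end WLInt

end DriftAux

open MeasureTheory DriftAux in
/- STATEMENT 18: if a unimodular compactly generated group admits a 1-cocycle of a
unitary representation with equivariant compression `≻ √n`, then the drift of every
cohomologically adapted probability measure with compact support vanishes. -/
theorem drift_eq_zero_of_compression_gt_sqrt
    {G : Type*} [Group G] [TopologicalSpace G] [IsTopologicalGroup G]
    [LocallyCompactSpace G] [SecondCountableTopology G]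
    [MeasurableSpace G] [BorelSpace G]
    (S : Set G) (hScpt : IsCompact S) (hSsymm : S⁻¹ = S)
    (hSgen : ∀ g : G, ∃ n : ℕ, g ∈ S ^ n)
    (hUni : (MeasureTheory.Measure.haar : MeasureTheory.Measure G).IsMulRightInvariant)
    (hfast : Nonempty (SuperSqrtCocycle G S)) :
    ∀ μ : MeasureTheory.Measure G, CohomologicallyAdapted S μ →
      (∃ K : Set G, IsCompact K ∧ μ Kᶜ = 0) →
      sInf {x : ℝ | ∃ n : ℕ, 1 ≤ n ∧
        x = (1 / (n : ℝ)) * ∫ g, (wordLength S g : ℝ) ∂(convPow μ n)} = 0 := by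
  intro μ hadapt _hcpt
  haveI : IsProbabilityMeasure μ := hadapt.isProb
  obtain ⟨c⟩ := hfast
  letI : NormedAddCommGroup c.H := c.ng
  letI : InnerProductSpace ℝ c.H := c.ip
  letI : CompleteSpace c.H := c.cs
  set T := {x : ℝ | ∃ n : ℕ, 1 ≤ n ∧
    x = (1 / (n : ℝ)) * ∫ g, (wordLength S g : ℝ) ∂(convPow μ n)} with hTdef
  have hTne : T.Nonempty :=
    ⟨(1 / ((1:ℕ) : ℝ)) * ∫ g, (wordLength S g : ℝ) ∂(convPow μ 1), 1, le_refl 1, rfl⟩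
  have hlb : ∀ x ∈ T, (0:ℝ) ≤ x := by
    rintro x ⟨n, hn1, rfl⟩
    have h1 : (0:ℝ) ≤ ∫ g, (wordLength S g : ℝ) ∂(convPow μ n) :=
      integral_nonneg fun g => Nat.cast_nonneg _
    have h2 : (0:ℝ) ≤ 1 / (n : ℝ) := by positivity
    exact mul_nonneg h2 h1
  have hbdd : BddBelow T := ⟨0, fun x hx => hlb x hx⟩
  have key : ∀ ε : ℝ, 0 < ε → ∃ x ∈ T, x < ε := by
    intro ε hε
    by_cases hA : ∀ m : ℕ, Integrable (fun g => (wordLength S g : ℝ)) (convPow μ (m + 1))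
    · -- the real case
      -- a bound for ‖b‖ on S
      obtain ⟨C0, hC0⟩ := (hScpt.image (continuous_norm.comp c.bCont)).bddAbove
      set C : ℝ := max C0 0 with hCdef
      have hC : ∀ s ∈ S, ‖c.b s‖ ≤ C := fun s hs =>
        le_trans (hC0 (Set.mem_image_of_mem _ hs)) (le_max_left _ _)
      have hCb : ∀ g : G, ‖c.b g‖ ≤ (wordLength S g : ℝ) * C :=
        norm_b_le S c.π c.b c.cocycle hSgen C (le_max_right _ _) hC
      have hmom2 : Integrable (fun g => (wordLength S g : ℝ) ^ 2) μ := by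
        have h := hadapt.finiteMoments 2 (by norm_num)
        have heq : (fun g => (wordLength S g : ℝ) ^ (2:ℝ))
            = fun g => (wordLength S g : ℝ) ^ 2 := by
          funext g
          rw [show (2:ℝ) = ((2:ℕ) : ℝ) by norm_num, Real.rpow_natCast]
        rwa [heq] at h
      have hwl2 : ∀ m : ℕ, Integrable (fun g => (wordLength S g : ℝ) ^ 2) (convPow μ (m + 1)) :=
        integrable_wl_sq S μ hSgen hA hmom2
      have hbint : ∀ m : ℕ, Integrable c.b (convPow μ (m + 1)) := by
        intro m
        refine Integrable.mono' ((hA m).mul_const C) c.bCont.aestronglyMeasurable ?_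
        filter_upwards with g
        exact hCb g
      have hbint2 : ∀ m : ℕ, Integrable (fun g => ‖c.b g‖ ^ 2) (convPow μ (m + 1)) := by
        intro m
        refine Integrable.mono' ((hwl2 m).mul_const (C ^ 2))
          ((c.bCont.norm.pow 2).aestronglyMeasurable) ?_
        filter_upwards with g
        rw [Real.norm_eq_abs, abs_of_nonneg (by positivity)]
        have h := hCb g
        have h0 : (0:ℝ) ≤ ‖c.b g‖ := norm_nonneg _
        nlinarith
      set ψ1 : ℝ := ∫ g, ‖c.b g‖ ^ 2 ∂μ with hψ1def
      have hψ1nn : 0 ≤ ψ1 := integral_nonneg fun g => by positivity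
      have hψ : ∀ k : ℕ, ∫ g, ‖c.b g‖ ^ 2 ∂(convPow μ (k + 1)) ≤ (k + 1 : ℝ) * ψ1 := by
        intro k
        have h := psi_bound c.π c.strongCont μ c.b c.bCont c.cocycle hadapt.symmetric
          hbint hbint2 k
        push_cast at h ⊢
        exact h
      set M : ℝ := max 1 (Real.sqrt (2 * ψ1 / ε) + 1) with hMdef
      have hM1 : (1:ℝ) ≤ M := le_max_left _ _
      have hM0 : (0:ℝ) < M := lt_of_lt_of_le zero_lt_one hM1
      have hMhalf : ψ1 / M ^ 2 < ε / 2 := by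
        have h1 : Real.sqrt (2 * ψ1 / ε) + 1 ≤ M := le_max_right _ _
        have h2 : Real.sqrt (2 * ψ1 / ε) ^ 2 = 2 * ψ1 / ε := Real.sq_sqrt (by positivity)
        have h3 : 2 * ψ1 / ε < M ^ 2 := by
          nlinarith [Real.sqrt_nonneg (2 * ψ1 / ε)]
        have h4 : 2 * ψ1 < M ^ 2 * ε := by
          rw [div_lt_iff₀ hε] at h3
          linarith
        rw [div_lt_div_iff₀ (by positivity) (by norm_num : (0:ℝ) < 2)]
        nlinarith
      obtain ⟨N, hN⟩ := c.fast M
      have hpt : ∀ g : G, (wordLength S g : ℝ) ≤ (N : ℝ) + ‖c.b g‖ ^ 2 / M ^ 2 := by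
        intro g
        by_cases hg : N ≤ wordLength S g
        · have hf := hN (wordLength S g) hg g rfl
          have hsq := mul_self_le_mul_self
            (mul_nonneg (le_of_lt hM0) (Real.sqrt_nonneg _)) hf
          have h1 : Real.sqrt (wordLength S g) ^ 2 = (wordLength S g : ℝ) :=
            Real.sq_sqrt (Nat.cast_nonneg _)
          have hM2 : M ^ 2 * (wordLength S g : ℝ) ≤ ‖c.b g‖ ^ 2 := by nlinarith
          have h5 : (wordLength S g : ℝ) ≤ ‖c.b g‖ ^ 2 / M ^ 2 :=
            (le_div_iff₀ (by positivity)).mpr (by nlinarith)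
          have hN0 : (0:ℝ) ≤ (N : ℝ) := Nat.cast_nonneg _
          linarith
        · push_neg at hg
          have h6 : (wordLength S g : ℝ) ≤ (N : ℝ) := by exact_mod_cast le_of_lt hg
          have h7 : (0:ℝ) ≤ ‖c.b g‖ ^ 2 / M ^ 2 := by positivity
          linarith
      obtain ⟨m0, hm0⟩ := exists_nat_gt (2 * (N : ℝ) / ε)
      have hm0' : 2 * (N : ℝ) / ε < ((m0 + 1 : ℕ) : ℝ) := by
        push_cast
        push_cast at hm0
        linarith
      have hnpos : (0:ℝ) < ((m0 + 1 : ℕ) : ℝ) := by positivity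
      have hint_le : ∫ g, (wordLength S g : ℝ) ∂(convPow μ (m0 + 1))
          ≤ (N : ℝ) + (((m0 + 1 : ℕ) : ℝ) * ψ1) / M ^ 2 := by
        have h1 : ∫ g, (wordLength S g : ℝ) ∂(convPow μ (m0 + 1))
            ≤ ∫ g, ((N : ℝ) + ‖c.b g‖ ^ 2 / M ^ 2) ∂(convPow μ (m0 + 1)) :=
          integral_mono (hA m0)
            ((integrable_const _).add ((hbint2 m0).div_const _)) hpt
        rw [integral_add (integrable_const _) ((hbint2 m0).div_const _),
          integral_const, integral_div] at h1
        have h2 : ∫ g, ‖c.b g‖ ^ 2 ∂(convPow μ (m0 + 1)) ≤ ((m0 + 1 : ℕ) : ℝ) * ψ1 := by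
          have := hψ m0
          push_cast
          push_cast at this
          linarith
        have h3 : (∫ g, ‖c.b g‖ ^ 2 ∂(convPow μ (m0 + 1))) / M ^ 2
            ≤ (((m0 + 1 : ℕ) : ℝ) * ψ1) / M ^ 2 :=
          (div_le_div_iff_of_pos_right (by positivity)).mpr h2
        have h4 : (0:ℝ) ≤ (N : ℝ) := Nat.cast_nonneg _
        simp only [probReal_univ, measure_univ, ENNReal.toReal_one, one_smul, smul_eq_mul, one_mul] at h1
        linarith
      refine ⟨(1 / ((m0 + 1 : ℕ) : ℝ)) * ∫ g, (wordLength S g : ℝ) ∂(convPow μ (m0 + 1)),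
        ⟨m0 + 1, Nat.succ_le_succ (Nat.zero_le m0), rfl⟩, ?_⟩
      have h4 : (1 / ((m0 + 1 : ℕ) : ℝ)) * ∫ g, (wordLength S g : ℝ) ∂(convPow μ (m0 + 1))
          ≤ (1 / ((m0 + 1 : ℕ) : ℝ)) * ((N : ℝ) + (((m0 + 1 : ℕ) : ℝ) * ψ1) / M ^ 2) :=
        mul_le_mul_of_nonneg_left hint_le (by positivity)
      have hn0 : ((m0 + 1 : ℕ) : ℝ) ≠ 0 := ne_of_gt hnpos
      have hM0' : M ≠ 0 := ne_of_gt hM0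
      have h5 : (1 / ((m0 + 1 : ℕ) : ℝ)) * ((N : ℝ) + (((m0 + 1 : ℕ) : ℝ) * ψ1) / M ^ 2)
          = (N : ℝ) / ((m0 + 1 : ℕ) : ℝ) + ψ1 / M ^ 2 := by
        field_simp
      have h6 : (N : ℝ) / ((m0 + 1 : ℕ) : ℝ) < ε / 2 := by
        rw [div_lt_iff₀ hnpos]
        rw [div_lt_iff₀ hε] at hm0'
        linarith
      calc (1 / ((m0 + 1 : ℕ) : ℝ)) * ∫ g, (wordLength S g : ℝ) ∂(convPow μ (m0 + 1))
          ≤ (1 / ((m0 + 1 : ℕ) : ℝ)) * ((N : ℝ) + (((m0 + 1 : ℕ) : ℝ) * ψ1) / M ^ 2) := h4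
      _ = (N : ℝ) / ((m0 + 1 : ℕ) : ℝ) + ψ1 / M ^ 2 := h5
      _ < ε / 2 + ε / 2 := by exact add_lt_add h6 hMhalf
      _ = ε := by ring
    · push_neg at hA
      obtain ⟨m, hm⟩ := hA
      refine ⟨(1 / ((m + 1 : ℕ) : ℝ)) * ∫ g, (wordLength S g : ℝ) ∂(convPow μ (m + 1)),
        ⟨m + 1, Nat.succ_le_succ (Nat.zero_le m), rfl⟩, ?_⟩
      rw [integral_undef hm, mul_zero]
      exact hε
  refine le_antisymm ?_ (le_csInf hTne hlb)
  by_contra h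
  push_neg at h
  obtain ⟨x, hxT, hx⟩ := key (sInf T) h
  exact absurd (csInf_le hbdd hxT) (not_le.mpr hx)
end
end

section
/- Let G be a locally compact second countable, compactly generated group with compact symmetric generating set S, and let μ be a cohomologically adapted probability measure on G. Let 2 ≤ p < ∞, c > 0 and d > 0, and let E be a real Banach space satisfying both the (p,c)-uniform convexity inequality and the (2,d)-uniform smoothness inequality with a common duality map J. Let π : G → O(E) be a strongly continuous isometric linear representation and b ∈ Z¹(G, π) a 1-cocycle. Assume there is a μ-harmonic 1-cocycle b_h ∈ Z¹(G, π) with ∫_G ‖b_h(g)‖^p dμ(g) > 0 such that b − b_h is bounded, i.e. sup_{g ∈ G} ‖b(g) − b_h(g)‖ < ∞. Then there exists C > 0 such that for all n ≥ 1: (∫_G ‖b(g)‖^p dμ^{*n}(g))^{1/p} ≥ C⁻¹ · n^{1/p} and (∫_G ‖b(g)‖² dμ^{*n}(g))^{1/2} ≤ C · n^{1/2}. -/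
open Pointwise
open scoped ENNReal

noncomputable section

/-- `E` satisfies the `(p,c)`-uniform convexity inequality with duality map `J`:
`J` is continuous, `⟨x, Jx⟩ = ‖x‖²`, `‖Jx‖ = ‖x‖` and
`‖x+y‖^p ≥ ‖x‖^p + p⟨y, x^{*_p}⟩ + c‖y‖^p`. -/
structure IsConvexDualityMap {E : Type*} [NormedAddCommGroup E] [NormedSpace ℝ E]
    (p c : ℝ) (J : E → StrongDual ℝ E) : Prop where
  continuous : Continuous J
  pairing : ∀ x : E, J x x = ‖x‖ ^ 2
  norm_eq : ∀ x : E, ‖J x‖ = ‖x‖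
  ineq : ∀ x y : E, ‖x‖ ^ p + p * starMap J p x y + c * ‖y‖ ^ p ≤ ‖x + y‖ ^ p

/- STATEMENT 19: growth of 1-cocycles cohomologous to a nonzero harmonic cocycle, on a
Banach space that is both smooth `(p,c)`-uniformly convex and `(2,d)`-uniformly smooth
(e.g. a separable `L^p`-space, `2 ≤ p < ∞`):
`‖b‖_{L^p(μ^{*n})} ≥ C⁻¹ n^{1/p}` and `‖b‖_{L²(μ^{*n})} ≤ C n^{1/2}`. -/

open MeasureTheory in
private lemma two_rpow_aux {a b p : ℝ} (ha : 0 ≤ a) (hb : 0 ≤ b) (hp : 0 ≤ p) :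
    (a + b) ^ p ≤ 2 ^ p * (a ^ p + b ^ p) := by
  have hab : a + b ≤ 2 * max a b := by
    rcases le_total a b with h | h
    · rw [max_eq_right h]; linarith
    · rw [max_eq_left h]; linarith
  have h0 : (0:ℝ) ≤ max a b := le_max_of_le_left ha
  calc (a + b) ^ p ≤ (2 * max a b) ^ p :=
        Real.rpow_le_rpow (by linarith) hab hp
    _ = 2 ^ p * (max a b) ^ p := Real.mul_rpow (by norm_num) h0
    _ ≤ 2 ^ p * (a ^ p + b ^ p) := by
        refine mul_le_mul_of_nonneg_left ?_ (Real.rpow_nonneg (by norm_num) p)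
        rcases le_total a b with h | h
        · rw [max_eq_right h]
          have := Real.rpow_nonneg ha p; linarith
        · rw [max_eq_left h]
          have := Real.rpow_nonneg hb p; linarith

set_option maxHeartbeats 10000000 in
theorem cocycle_growth_of_harmonic_plus_bounded
    {G : Type*} [Group G] [TopologicalSpace G] [IsTopologicalGroup G]
    [LocallyCompactSpace G] [SecondCountableTopology G]
    [MeasurableSpace G] [BorelSpace G]
    (S : Set G) (hScpt : IsCompact S) (hSsymm : S⁻¹ = S)
    (hSgen : ∀ g : G, ∃ n : ℕ, g ∈ S ^ n)
    (μ : MeasureTheory.Measure G) (hμ : CohomologicallyAdapted S μ)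
    (p c d : ℝ) (hp : 2 ≤ p) (hc : 0 < c) (hd : 0 < d)
    {E : Type*} [NormedAddCommGroup E] [NormedSpace ℝ E] [CompleteSpace E]
    (J : E → StrongDual ℝ E) (hJconv : IsConvexDualityMap p c J)
    (hJsmooth : ∀ x y : E, ‖x + y‖ ^ 2 ≤ ‖x‖ ^ 2 + 2 * J x y + d * ‖y‖ ^ 2)
    (π : G →* (E ≃ₗᵢ[ℝ] E)) (hπ : ∀ x : E, Continuous fun g : G => π g x)
    (b : G → E) (hb : Continuous b)
    (hcoc : ∀ g h : G, b (g * h) = b g + π g (b h))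
    (bh : G → E) (hbh : Continuous bh)
    (hbhcoc : ∀ g h : G, bh (g * h) = bh g + π g (bh h))
    (hharm : ∫ g, bh g ∂μ = 0)
    (hpos : 0 < ∫ g, ‖bh g‖ ^ p ∂μ)
    (hbdd : ∃ M : ℝ, ∀ g : G, ‖b g - bh g‖ ≤ M) :
    ∃ C : ℝ, 0 < C ∧ ∀ n : ℕ, 1 ≤ n →
      C⁻¹ * (n : ℝ) ^ (1 / p) ≤ (∫ g, ‖b g‖ ^ p ∂(convPow μ n)) ^ (1 / p) ∧
      (∫ g, ‖b g‖ ^ 2 ∂(convPow μ n)) ^ ((1 : ℝ) / 2)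
        ≤ C * (n : ℝ) ^ ((1 : ℝ) / 2) := by
  classical
  open MeasureTheory Filter in
  obtain ⟨M, hM⟩ := hbdd
  haveI hPμ : IsProbabilityMeasure μ := hμ.isProb
  have hp0 : (0:ℝ) < p := lt_of_lt_of_le two_pos hp
  have hp1 : (1:ℝ) ≤ p := by linarith
  -- cocycles vanish at 1
  have hbh1 : bh 1 = 0 := by
    have h := hbhcoc 1 1
    rw [one_mul, map_one] at h
    simpa using h.symm
  have hb1 : b 1 = 0 := by
    have h := hcoc 1 1
    rw [one_mul, map_one] at h
    simpa using h.symm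
  have hM0 : (0:ℝ) ≤ M := le_trans (norm_nonneg _) (hM 1)
  -- comparison between b and bh
  have hbB : ∀ g : G, ‖b g‖ ≤ ‖bh g‖ + M := by
    intro g
    have h : bh g + (b g - bh g) = b g := by abel
    calc ‖b g‖ = ‖bh g + (b g - bh g)‖ := by rw [h]
      _ ≤ ‖bh g‖ + ‖b g - bh g‖ := norm_add_le _ _
      _ ≤ ‖bh g‖ + M := by linarith [hM g]
  have hbhB : ∀ g : G, ‖bh g‖ ≤ ‖b g‖ + M := by
    intro g
    have h : b g - (b g - bh g) = bh g := by abel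
    calc ‖bh g‖ = ‖b g - (b g - bh g)‖ := by rw [h]
      _ ≤ ‖b g‖ + ‖b g - bh g‖ := norm_sub_le _ _
      _ ≤ ‖b g‖ + M := by linarith [hM g]
  -- bh is not identically zero
  have hbhne : ∃ g : G, bh g ≠ 0 := by
    by_contra hno
    push_neg at hno
    simp only [hno, norm_zero, Real.zero_rpow hp0.ne', integral_zero] at hpos
    exact lt_irrefl 0 hpos
  -- S is nonempty
  have hSnon : S.Nonempty := by
    by_contra hS0
    rw [Set.not_nonempty_iff_eq_empty] at hS0
    obtain ⟨g0, hg0⟩ := hbhne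
    obtain ⟨m, hm⟩ := hSgen g0
    rcases Nat.eq_zero_or_pos m with rfl | hmpos
    · rw [pow_zero] at hm
      rw [Set.mem_one] at hm
      exact hg0 (hm ▸ hbh1)
    · rw [hS0, Set.empty_pow hmpos.ne'] at hm
      exact hm
  obtain ⟨s₀, hs₀⟩ := hSnon
  have hs₀' : s₀⁻¹ ∈ S := by
    rw [← hSsymm]
    exact Set.inv_mem_inv.2 hs₀
  -- c ≤ 1 and 1 ≤ d
  have hc1 : c ≤ 1 := by
    obtain ⟨g0, hg0⟩ := hbhne
    have h0 := hJconv.ineq 0 (bh g0)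
    have hnz : (0:ℝ) < ‖bh g0‖ ^ p := Real.rpow_pos_of_pos (norm_pos_iff.2 hg0) p
    have hsm : starMap J p (0:E) = 0 := by simp [starMap]
    rw [hsm] at h0
    simp only [norm_zero, Real.zero_rpow hp0.ne', zero_add,
      ContinuousLinearMap.zero_apply, mul_zero, add_zero] at h0
    nlinarith
  have hd1 : (1:ℝ) ≤ d := by
    obtain ⟨g0, hg0⟩ := hbhne
    have hJ0 : J 0 = 0 := by
      have := hJconv.norm_eq 0
      rw [norm_zero, norm_eq_zero] at this
      exact this
    have h0 := hJsmooth 0 (bh g0)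
    rw [hJ0] at h0
    simp only [norm_zero, zero_add, ContinuousLinearMap.zero_apply, mul_zero] at h0
    have hnz : (0:ℝ) < ‖bh g0‖ ^ 2 := pow_pos (norm_pos_iff.2 hg0) 2
    nlinarith
  -- convolution powers are probability measures
  have hconv : ∀ n : ℕ, convPow μ (n+1)
      = MeasureTheory.Measure.map (fun q : G × G => q.1 * q.2) ((convPow μ n).prod μ) :=
    fun n => rfl
  have hPν : ∀ n : ℕ, IsProbabilityMeasure (convPow μ n) := by
    intro n
    induction n with
    | zero => exact (by infer_instance : IsProbabilityMeasure (Measure.dirac (1:G)))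
    | succ n IH =>
      haveI := IH
      rw [hconv n]
      exact Measure.isProbabilityMeasure_map measurable_mul.aemeasurable
  have hν1 : convPow μ 1 = μ := by
    rw [hconv 0]
    show Measure.map _ ((Measure.dirac (1:G)).prod μ) = μ
    rw [Measure.dirac_prod, Measure.map_map measurable_mul measurable_prodMk_left]
    simp [Function.comp_def]
  -- word-length bound for bh on S-balls
  obtain ⟨K₁, hK₁⟩ := hScpt.exists_bound_of_continuousOn hbh.norm.continuousOn
  set K : ℝ := max K₁ 0 with hKdef
  have hK0 : (0:ℝ) ≤ K := le_max_right _ _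
  have hK : ∀ s ∈ S, ‖bh s‖ ≤ K := by
    intro s hs
    have := hK₁ s hs
    rw [Real.norm_eq_abs] at this
    exact le_trans (le_abs_self _) (le_max_of_le_left this)
  have hgrowS : ∀ (m : ℕ), ∀ g ∈ S ^ m, ‖bh g‖ ≤ K * m := by
    intro m
    induction m with
    | zero =>
      intro g hg
      rw [pow_zero, Set.mem_one] at hg
      simp [hg, hbh1]
    | succ m IH =>
      intro g hg
      rw [pow_succ] at hg
      obtain ⟨x, hx, y, hy, rfl⟩ := Set.mem_mul.1 hg
      have h1 : ‖bh (x * y)‖ ≤ ‖bh x‖ + ‖bh y‖ := by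
        rw [hbhcoc]
        exact (norm_add_le _ _).trans (by rw [(π x).norm_map])
      have h2 := IH x hx
      have h3 := hK y hy
      push_cast
      linarith
  have hmemS : ∀ g : G, g ∈ S ^ (wordLength S g) := by
    intro g
    exact Nat.sInf_mem (hSgen g)
  have hgrow : ∀ g : G, ‖bh g‖ ≤ K * (wordLength S g : ℝ) :=
    fun g => hgrowS _ g (hmemS g)
  -- integrability of bh and its powers with respect to μ
  have hW1 : Integrable (fun g => (wordLength S g : ℝ)) μ := by
    have := hμ.finiteMoments 1 le_rfl
    simpa [Real.rpow_one] using this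
  have hbh_int : Integrable bh μ := by
    refine Integrable.mono' (hW1.const_mul K)
      hbh.stronglyMeasurable.aestronglyMeasurable (Filter.Eventually.of_forall ?_)
    intro g
    exact hgrow g
  have hφpc : Continuous fun g : G => ‖bh g‖ ^ p :=
    hbh.norm.rpow_const (fun _ => Or.inr hp0.le)
  have hφ2c : Continuous fun g : G => ‖bh g‖ ^ 2 := hbh.norm.pow 2
  have hφp_intμ : Integrable (fun g => ‖bh g‖ ^ p) μ := by
    refine Integrable.mono' ((hμ.finiteMoments p hp1).const_mul (K ^ p))
      hφpc.stronglyMeasurable.aestronglyMeasurable (Filter.Eventually.of_forall ?_)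
    intro g
    rw [Real.norm_eq_abs, abs_of_nonneg (Real.rpow_nonneg (norm_nonneg _) p)]
    calc ‖bh g‖ ^ p ≤ (K * (wordLength S g : ℝ)) ^ p :=
          Real.rpow_le_rpow (norm_nonneg _) (hgrow g) hp0.le
      _ = K ^ p * (wordLength S g : ℝ) ^ p :=
          Real.mul_rpow hK0 (Nat.cast_nonneg _)
  have hφ2_intμ : Integrable (fun g => ‖bh g‖ ^ 2) μ := by
    have hW2 : Integrable (fun g => ((wordLength S g : ℝ)) ^ (2:ℕ)) μ := by
      have := hμ.finiteMoments 2 one_le_two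
      simpa [Real.rpow_natCast] using this
    refine Integrable.mono' (hW2.const_mul (K ^ 2))
      hφ2c.stronglyMeasurable.aestronglyMeasurable (Filter.Eventually.of_forall ?_)
    intro g
    rw [Real.norm_eq_abs, abs_of_nonneg (pow_nonneg (norm_nonneg _) 2)]
    calc ‖bh g‖ ^ 2 ≤ (K * (wordLength S g : ℝ)) ^ 2 := by
          have := hgrow g
          nlinarith [norm_nonneg (bh g)]
      _ = K ^ 2 * (wordLength S g : ℝ) ^ 2 := by ring
  -- cross terms vanish by harmonicity
  have hcross : ∀ (L : E →L[ℝ] ℝ) (g : G), ∫ h, L ((π g) (bh h)) ∂μ = 0 := by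
    intro L g
    have h1 : ∫ h, (L.comp (π g).toLinearIsometry.toContinuousLinearMap) (bh h) ∂μ
        = (L.comp (π g).toLinearIsometry.toContinuousLinearMap) (∫ h, bh h ∂μ) :=
      ContinuousLinearMap.integral_comp_comm _ hbh_int
    rw [hharm, map_zero] at h1
    simpa using h1
  -- product integrability helper
  have hprodI : ∀ (ν' : Measure G), IsProbabilityMeasure ν' →
      ∀ (φ : G → ℝ), Continuous φ → (∀ g, 0 ≤ φ g) → ∀ A : ℝ,
      (∀ g h : G, φ (g * h) ≤ A * (φ g + φ h)) →
      Integrable φ ν' → Integrable φ μ →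
      Integrable (fun q : G × G => φ (q.1 * q.2)) (ν'.prod μ) := by
    intro ν' hν' φ hφc hφ0 A hsub h1 h2
    haveI := hν'
    have hfst : Integrable (fun q : G × G => φ q.1) (ν'.prod μ) := by
      have h := (integrable_map_measure (μ := ν'.prod μ) (f := Prod.fst)
        hφc.stronglyMeasurable.aestronglyMeasurable measurable_fst.aemeasurable)
      rw [Measure.map_fst_prod] at h
      simpa [Function.comp_def] using h.1 (by simpa using h1)
    have hsnd : Integrable (fun q : G × G => φ q.2) (ν'.prod μ) := by
      have h := (integrable_map_measure (μ := ν'.prod μ) (f := Prod.snd)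
        hφc.stronglyMeasurable.aestronglyMeasurable measurable_snd.aemeasurable)
      rw [Measure.map_snd_prod] at h
      simpa [Function.comp_def] using h.1 (by simpa using h2)
    refine Integrable.mono' ((hfst.add hsnd).const_mul A)
      ((hφc.comp continuous_mul).stronglyMeasurable.aestronglyMeasurable)
      (Filter.Eventually.of_forall ?_)
    rintro ⟨g, h⟩
    rw [Real.norm_eq_abs, abs_of_nonneg (hφ0 _)]
    exact hsub g h
  -- subadditivity bounds
  have hsubp : ∀ g h : G, ‖bh (g * h)‖ ^ p ≤ 2 ^ p * (‖bh g‖ ^ p + ‖bh h‖ ^ p) := by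
    intro g h
    have h1 : ‖bh (g * h)‖ ≤ ‖bh g‖ + ‖bh h‖ := by
      rw [hbhcoc]
      exact (norm_add_le _ _).trans (by rw [(π g).norm_map])
    calc ‖bh (g * h)‖ ^ p ≤ (‖bh g‖ + ‖bh h‖) ^ p :=
          Real.rpow_le_rpow (norm_nonneg _) h1 hp0.le
      _ ≤ 2 ^ p * (‖bh g‖ ^ p + ‖bh h‖ ^ p) :=
          two_rpow_aux (norm_nonneg _) (norm_nonneg _) hp0.le
  have hsub2 : ∀ g h : G, ‖bh (g * h)‖ ^ 2 ≤ 2 * (‖bh g‖ ^ 2 + ‖bh h‖ ^ 2) := by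
    intro g h
    have h1 : ‖bh (g * h)‖ ≤ ‖bh g‖ + ‖bh h‖ := by
      rw [hbhcoc]
      exact (norm_add_le _ _).trans (by rw [(π g).norm_map])
    have h2 : ‖bh (g * h)‖ ^ 2 ≤ (‖bh g‖ + ‖bh h‖) ^ 2 :=
      pow_le_pow_left₀ (norm_nonneg _) h1 2
    nlinarith [sq_nonneg (‖bh g‖ - ‖bh h‖)]
  -- the key recursion, lower (convexity) version
  have hrecp : ∀ n : ℕ, Integrable (fun g => ‖bh g‖ ^ p) (convPow μ n) →
      Integrable (fun g => ‖bh g‖ ^ p) (convPow μ (n+1)) ∧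
      (∫ g, ‖bh g‖ ^ p ∂(convPow μ n)) + c * (∫ g, ‖bh g‖ ^ p ∂μ)
        ≤ ∫ g, ‖bh g‖ ^ p ∂(convPow μ (n+1)) := by
    intro n hInt
    haveI := hPν n
    have hprodInt : Integrable (fun q : G × G => ‖bh (q.1 * q.2)‖ ^ p)
        ((convPow μ n).prod μ) :=
      hprodI _ (hPν n) _ hφpc (fun g => Real.rpow_nonneg (norm_nonneg _) p)
        (2 ^ p) hsubp hInt hφp_intμ
    have hInt' : Integrable (fun g => ‖bh g‖ ^ p) (convPow μ (n+1)) := by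
      rw [hconv n]
      exact (integrable_map_measure hφpc.stronglyMeasurable.aestronglyMeasurable
        measurable_mul.aemeasurable).2 hprodInt
    refine ⟨hInt', ?_⟩
    have heq : ∫ g, ‖bh g‖ ^ p ∂(convPow μ (n+1))
        = ∫ g, ∫ h, ‖bh (g * h)‖ ^ p ∂μ ∂(convPow μ n) := by
      rw [hconv n, integral_map measurable_mul.aemeasurable
        hφpc.stronglyMeasurable.aestronglyMeasurable]
      exact integral_prod _ hprodInt
    rw [heq]
    have hinner : ∀ᵐ g ∂(convPow μ n),
        ‖bh g‖ ^ p + c * (∫ g', ‖bh g'‖ ^ p ∂μ) ≤ ∫ h, ‖bh (g * h)‖ ^ p ∂μ := by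
      filter_upwards [hprodInt.prod_right_ae] with g hg
      have hg' : Integrable (fun h => ‖bh (g * h)‖ ^ p) μ := hg
      set L : E →L[ℝ] ℝ :=
        (starMap J p (bh g)).comp (π g).toLinearIsometry.toContinuousLinearMap with hLdef
      have hLint : Integrable (fun h => L (bh h)) μ := L.integrable_comp hbh_int
      have hpt : ∀ h : G,
          ‖bh g‖ ^ p + p * L (bh h) + c * ‖bh h‖ ^ p ≤ ‖bh (g * h)‖ ^ p := by
        intro h
        have h0 := hJconv.ineq (bh g) ((π g) (bh h))
        have hn : ‖(π g) (bh h)‖ = ‖bh h‖ := (π g).norm_map _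
        rw [hn] at h0
        have hLg : L (bh h) = (starMap J p (bh g)) ((π g) (bh h)) := by
          simp [hLdef]
        rw [hbhcoc g h, hLg]
        exact h0
      have hA : Integrable (fun _ : G => ‖bh g‖ ^ p) μ := integrable_const _
      have hB : Integrable (fun h => p * L (bh h)) μ := hLint.const_mul p
      have hAB : Integrable (fun h => ‖bh g‖ ^ p + p * L (bh h)) μ := hA.add hB
      have hC : Integrable (fun h => c * ‖bh h‖ ^ p) μ := hφp_intμ.const_mul c
      have hrhs : Integrable
          (fun h => ‖bh g‖ ^ p + p * L (bh h) + c * ‖bh h‖ ^ p) μ := hAB.add hC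
      have hmono := integral_mono hrhs hg' hpt
      have hCL : ∫ h, L (bh h) ∂μ = 0 := by
        have h1 : ∫ h, (starMap J p (bh g)) ((π g) (bh h)) ∂μ = 0 :=
          hcross (starMap J p (bh g)) g
        have h2 : ∀ h : G, L (bh h) = (starMap J p (bh g)) ((π g) (bh h)) := by
          intro h; simp [hLdef]
        rw [show (fun h => L (bh h)) = fun h => (starMap J p (bh g)) ((π g) (bh h))
          from funext h2]
        exact h1
      rw [integral_add hAB hC, integral_add hA hB,
          integral_const, integral_const_mul, integral_const_mul, hCL] at hmono
      simp only [measure_univ, probReal_univ, ENNReal.toReal_one, one_smul, mul_zero, add_zero] at hmono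
      linarith
    have hO1 : Integrable (fun g => ∫ h, ‖bh (g * h)‖ ^ p ∂μ) (convPow μ n) :=
      hprodInt.integral_prod_left
    have hO2 : Integrable (fun g => ‖bh g‖ ^ p + c * (∫ g', ‖bh g'‖ ^ p ∂μ))
        (convPow μ n) := hInt.add (integrable_const _)
    have hfin := integral_mono_ae hO2 hO1 hinner
    rw [integral_add hInt (integrable_const _), integral_const] at hfin
    simpa [measure_univ] using hfin
  -- the key recursion, upper (smoothness) version
  have hrec2 : ∀ n : ℕ, Integrable (fun g => ‖bh g‖ ^ 2) (convPow μ n) →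
      Integrable (fun g => ‖bh g‖ ^ 2) (convPow μ (n+1)) ∧
      ∫ g, ‖bh g‖ ^ 2 ∂(convPow μ (n+1))
        ≤ (∫ g, ‖bh g‖ ^ 2 ∂(convPow μ n)) + d * (∫ g, ‖bh g‖ ^ 2 ∂μ) := by
    intro n hInt
    haveI := hPν n
    have hprodInt : Integrable (fun q : G × G => ‖bh (q.1 * q.2)‖ ^ 2)
        ((convPow μ n).prod μ) :=
      hprodI _ (hPν n) _ hφ2c (fun g => pow_nonneg (norm_nonneg _) 2)
        2 hsub2 hInt hφ2_intμ
    have hInt' : Integrable (fun g => ‖bh g‖ ^ 2) (convPow μ (n+1)) := by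
      rw [hconv n]
      exact (integrable_map_measure hφ2c.stronglyMeasurable.aestronglyMeasurable
        measurable_mul.aemeasurable).2 hprodInt
    refine ⟨hInt', ?_⟩
    have heq : ∫ g, ‖bh g‖ ^ 2 ∂(convPow μ (n+1))
        = ∫ g, ∫ h, ‖bh (g * h)‖ ^ 2 ∂μ ∂(convPow μ n) := by
      rw [hconv n, integral_map measurable_mul.aemeasurable
        hφ2c.stronglyMeasurable.aestronglyMeasurable]
      exact integral_prod _ hprodInt
    rw [heq]
    have hinner : ∀ᵐ g ∂(convPow μ n),
        ∫ h, ‖bh (g * h)‖ ^ 2 ∂μ ≤ ‖bh g‖ ^ 2 + d * (∫ g', ‖bh g'‖ ^ 2 ∂μ) := by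
      filter_upwards [hprodInt.prod_right_ae] with g hg
      have hg' : Integrable (fun h => ‖bh (g * h)‖ ^ 2) μ := hg
      set L : E →L[ℝ] ℝ :=
        (J (bh g)).comp (π g).toLinearIsometry.toContinuousLinearMap with hLdef
      have hLint : Integrable (fun h => L (bh h)) μ := L.integrable_comp hbh_int
      have hpt : ∀ h : G,
          ‖bh (g * h)‖ ^ 2 ≤ ‖bh g‖ ^ 2 + 2 * L (bh h) + d * ‖bh h‖ ^ 2 := by
        intro h
        have h0 := hJsmooth (bh g) ((π g) (bh h))
        have hn : ‖(π g) (bh h)‖ = ‖bh h‖ := (π g).norm_map _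
        rw [hn] at h0
        have hLg : L (bh h) = (J (bh g)) ((π g) (bh h)) := by
          simp [hLdef]
        rw [hbhcoc g h, hLg]
        exact h0
      have hA : Integrable (fun _ : G => ‖bh g‖ ^ 2) μ := integrable_const _
      have hB : Integrable (fun h => 2 * L (bh h)) μ := hLint.const_mul 2
      have hAB : Integrable (fun h => ‖bh g‖ ^ 2 + 2 * L (bh h)) μ := hA.add hB
      have hC : Integrable (fun h => d * ‖bh h‖ ^ 2) μ := hφ2_intμ.const_mul d
      have hrhs : Integrable
          (fun h => ‖bh g‖ ^ 2 + 2 * L (bh h) + d * ‖bh h‖ ^ 2) μ := hAB.add hC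
      have hmono := integral_mono hg' hrhs hpt
      have hCL : ∫ h, L (bh h) ∂μ = 0 := by
        have h1 : ∫ h, (J (bh g)) ((π g) (bh h)) ∂μ = 0 := hcross (J (bh g)) g
        have h2 : ∀ h : G, L (bh h) = (J (bh g)) ((π g) (bh h)) := by
          intro h; simp [hLdef]
        rw [show (fun h => L (bh h)) = fun h => (J (bh g)) ((π g) (bh h))
          from funext h2]
        exact h1
      rw [integral_add hAB hC, integral_add hA hB,
          integral_const, integral_const_mul, integral_const_mul, hCL] at hmono
      simp only [measure_univ, probReal_univ, ENNReal.toReal_one, one_smul, mul_zero, add_zero] at hmono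
      linarith
    have hO1 : Integrable (fun g => ∫ h, ‖bh (g * h)‖ ^ 2 ∂μ) (convPow μ n) :=
      hprodInt.integral_prod_left
    have hO2 : Integrable (fun g => ‖bh g‖ ^ 2 + d * (∫ g', ‖bh g'‖ ^ 2 ∂μ))
        (convPow μ n) := hInt.add (integrable_const _)
    have hfin := integral_mono_ae hO1 hO2 hinner
    rw [integral_add hInt (integrable_const _), integral_const] at hfin
    simpa [measure_univ] using hfin
  -- iterate the recursions
  have hFall : ∀ n : ℕ, 1 ≤ n →
      Integrable (fun g => ‖bh g‖ ^ p) (convPow μ n) ∧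
      (n : ℝ) * (c * ∫ g, ‖bh g‖ ^ p ∂μ) ≤ ∫ g, ‖bh g‖ ^ p ∂(convPow μ n) := by
    intro n hn
    induction n with
    | zero => omega
    | succ n IH =>
      rcases Nat.eq_zero_or_pos n with rfl | hn'
      · refine ⟨by rw [zero_add, hν1]; exact hφp_intμ, ?_⟩
        rw [zero_add, hν1]
        have hcf : c * (∫ g, ‖bh g‖ ^ p ∂μ) ≤ ∫ g, ‖bh g‖ ^ p ∂μ :=
          mul_le_of_le_one_left hpos.le hc1
        push_cast
        linarith only [hcf]
      · obtain ⟨hI, hge⟩ := IH hn'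
        obtain ⟨hI', hstep⟩ := hrecp n hI
        refine ⟨hI', ?_⟩
        push_cast
        nlinarith only [hge, hstep]
  have hTall : ∀ n : ℕ, 1 ≤ n →
      Integrable (fun g => ‖bh g‖ ^ 2) (convPow μ n) ∧
      ∫ g, ‖bh g‖ ^ 2 ∂(convPow μ n) ≤ (n : ℝ) * (d * ∫ g, ‖bh g‖ ^ 2 ∂μ) := by
    intro n hn
    have hT1 : (0:ℝ) ≤ ∫ g, ‖bh g‖ ^ 2 ∂μ :=
      integral_nonneg (fun g => pow_nonneg (norm_nonneg _) 2)
    induction n with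
    | zero => omega
    | succ n IH =>
      rcases Nat.eq_zero_or_pos n with rfl | hn'
      · refine ⟨by rw [zero_add, hν1]; exact hφ2_intμ, ?_⟩
        rw [zero_add, hν1]
        have hdf : ∫ g, ‖bh g‖ ^ 2 ∂μ ≤ d * ∫ g, ‖bh g‖ ^ 2 ∂μ :=
          le_mul_of_one_le_left hT1 hd1
        push_cast
        linarith only [hdf]
      · obtain ⟨hI, hle⟩ := IH hn'
        obtain ⟨hI', hstep⟩ := hrec2 n hI
        refine ⟨hI', ?_⟩
        push_cast
        nlinarith only [hle, hstep]
  -- integrability of ‖b‖^p, ‖b‖² w.r.t. convolution powers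
  have hbpc : Continuous fun g : G => ‖b g‖ ^ p :=
    hb.norm.rpow_const (fun _ => Or.inr hp0.le)
  have hb2c : Continuous fun g : G => ‖b g‖ ^ 2 := hb.norm.pow 2
  have hbp_int : ∀ n : ℕ, 1 ≤ n → Integrable (fun g => ‖b g‖ ^ p) (convPow μ n) := by
    intro n hn
    haveI := hPν n
    refine Integrable.mono' ((((hFall n hn).1).add (integrable_const (M ^ p))).const_mul
      (2 ^ p)) hbpc.stronglyMeasurable.aestronglyMeasurable (Filter.Eventually.of_forall ?_)
    intro g
    rw [Real.norm_eq_abs, abs_of_nonneg (Real.rpow_nonneg (norm_nonneg _) p)]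
    calc ‖b g‖ ^ p ≤ (‖bh g‖ + M) ^ p :=
          Real.rpow_le_rpow (norm_nonneg _) (hbB g) hp0.le
      _ ≤ 2 ^ p * (‖bh g‖ ^ p + M ^ p) := two_rpow_aux (norm_nonneg _) hM0 hp0.le
  have hb2_int : ∀ n : ℕ, 1 ≤ n → Integrable (fun g => ‖b g‖ ^ 2) (convPow μ n) := by
    intro n hn
    haveI := hPν n
    have hdom : Integrable (fun g : G => 2 * (‖bh g‖ ^ 2 + M ^ 2)) (convPow μ n) :=
      (((hTall n hn).1).add (integrable_const (M ^ 2))).const_mul 2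
    refine Integrable.mono' hdom
      hb2c.stronglyMeasurable.aestronglyMeasurable (Filter.Eventually.of_forall ?_)
    intro g
    rw [Real.norm_eq_abs, abs_of_nonneg (pow_nonneg (norm_nonneg _) 2)]
    calc ‖b g‖ ^ 2 ≤ (‖bh g‖ + M) ^ 2 := pow_le_pow_left₀ (norm_nonneg _) (hbB g) 2
      _ ≤ 2 * (‖bh g‖ ^ 2 + M ^ 2) := by nlinarith only [sq_nonneg (‖bh g‖ - M)]
  -- upper bound for the L² integral of b
  have hup : ∀ n : ℕ, 1 ≤ n →
      ∫ g, ‖b g‖ ^ 2 ∂(convPow μ n)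
        ≤ (n : ℝ) * (2 * (d * ∫ g, ‖bh g‖ ^ 2 ∂μ) + 2 * M ^ 2) := by
    intro n hn
    haveI := hPν n
    have hT1 : (0:ℝ) ≤ ∫ g, ‖bh g‖ ^ 2 ∂μ :=
      integral_nonneg (fun g => pow_nonneg (norm_nonneg _) 2)
    have hA : Integrable (fun g => 2 * ‖bh g‖ ^ 2) (convPow μ n) :=
      ((hTall n hn).1).const_mul 2
    have hB : Integrable (fun _ : G => 2 * M ^ 2) (convPow μ n) := integrable_const _
    have h1 : ∫ g, ‖b g‖ ^ 2 ∂(convPow μ n)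
        ≤ ∫ g, (2 * ‖bh g‖ ^ 2 + 2 * M ^ 2) ∂(convPow μ n) := by
      refine integral_mono (hb2_int n hn) (hA.add hB) ?_
      intro g
      calc ‖b g‖ ^ 2 ≤ (‖bh g‖ + M) ^ 2 := pow_le_pow_left₀ (norm_nonneg _) (hbB g) 2
        _ ≤ 2 * ‖bh g‖ ^ 2 + 2 * M ^ 2 := by nlinarith only [sq_nonneg (‖bh g‖ - M)]
    rw [integral_add hA hB, integral_const_mul, integral_const] at h1
    simp only [measure_univ, probReal_univ, ENNReal.toReal_one, one_smul] at h1
    have h2 := (hTall n hn).2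
    have hn1 : (1:ℝ) ≤ (n : ℝ) := by exact_mod_cast hn
    nlinarith only [h1, h2, hn1, sq_nonneg M]
  -- lower bound for the L^p integral of b
  have hlow : ∀ n : ℕ, 1 ≤ n →
      (n : ℝ) * (c * ∫ g, ‖bh g‖ ^ p ∂μ) / 2 ^ p - M ^ p
        ≤ ∫ g, ‖b g‖ ^ p ∂(convPow μ n) := by
    intro n hn
    haveI := hPν n
    have hA : Integrable (fun g => 2 ^ p * ‖b g‖ ^ p) (convPow μ n) :=
      (hbp_int n hn).const_mul _
    have hB : Integrable (fun _ : G => 2 ^ p * M ^ p) (convPow μ n) := integrable_const _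
    have h1 : ∫ g, ‖bh g‖ ^ p ∂(convPow μ n)
        ≤ ∫ g, (2 ^ p * ‖b g‖ ^ p + 2 ^ p * M ^ p) ∂(convPow μ n) := by
      refine integral_mono ((hFall n hn).1) (hA.add hB) ?_
      intro g
      calc ‖bh g‖ ^ p ≤ (‖b g‖ + M) ^ p :=
            Real.rpow_le_rpow (norm_nonneg _) (hbhB g) hp0.le
        _ ≤ 2 ^ p * (‖b g‖ ^ p + M ^ p) := two_rpow_aux (norm_nonneg _) hM0 hp0.le
        _ = 2 ^ p * ‖b g‖ ^ p + 2 ^ p * M ^ p := by ring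
    rw [integral_add hA hB, integral_const_mul, integral_const] at h1
    simp only [measure_univ, probReal_univ, ENNReal.toReal_one, one_smul] at h1
    have h2 := (hFall n hn).2
    have h2p : (0:ℝ) < 2 ^ p := Real.rpow_pos_of_pos two_pos p
    rw [div_sub' h2p.ne', div_le_iff₀ h2p]
    nlinarith only [h1, h2, h2p]
  -- positive measure of open sets meeting Sⁿ
  have hP1 : ∀ n : ℕ, 1 ≤ n → ∀ U : Set G, IsOpen U → (U ∩ S ^ n).Nonempty →
      0 < convPow μ n U := by
    intro n
    induction n with
    | zero => omega
    | succ n IH =>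
      intro _ U hU hne
      rcases Nat.eq_zero_or_pos n with rfl | hn'
      · rw [zero_add, hν1]
        obtain ⟨x, hxU, hxS⟩ := hne
        rw [pow_one] at hxS
        exact hμ.suppContains x hxS U hU hxU
      · haveI := hPν n
        obtain ⟨x, hxU, hxS⟩ := hne
        rw [pow_succ] at hxS
        obtain ⟨y, hy, z, hz, rfl⟩ := Set.mem_mul.1 hxS
        have hpre : IsOpen ((fun q : G × G => q.1 * q.2) ⁻¹' U) :=
          hU.preimage continuous_mul
        have hmem : (y, z) ∈ (fun q : G × G => q.1 * q.2) ⁻¹' U := hxU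
        obtain ⟨V, W, hV, hW, hyV, hzW, hVW⟩ := isOpen_prod_iff.1 hpre y z hmem
        have h1 : 0 < convPow μ n V := IH hn' V hV ⟨y, hyV, hy⟩
        have h2 : 0 < μ W := hμ.suppContains z hz W hW hzW
        have hmap : convPow μ (n+1) U
            = ((convPow μ n).prod μ) ((fun q : G × G => q.1 * q.2) ⁻¹' U) := by
          rw [hconv n, Measure.map_apply measurable_mul hU.measurableSet]
        rw [hmap]
        calc (0:ℝ≥0∞) < convPow μ n V * μ W := ENNReal.mul_pos h1.ne' h2.ne'
          _ = ((convPow μ n).prod μ) (V ×ˢ W) := (Measure.prod_prod V W).symm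
          _ ≤ ((convPow μ n).prod μ) ((fun q : G × G => q.1 * q.2) ⁻¹' U) :=
            measure_mono hVW
  -- b does not vanish identically on Sⁿ
  have hstep2 : ∀ (m : ℕ), ∀ g ∈ S ^ m, g ∈ S ^ (m + 2) := by
    intro m g hg
    have : g * s₀ * s₀⁻¹ ∈ S ^ m * S * S := Set.mul_mem_mul (Set.mul_mem_mul hg hs₀) hs₀'
    rw [mul_inv_cancel_right] at this
    have heq : S ^ m * S * S = S ^ (m + 2) := by rw [pow_add, sq, ← mul_assoc]
    rw [← heq]
    exact this
  have hup2 : ∀ (k m : ℕ), ∀ g ∈ S ^ m, g ∈ S ^ (m + 2 * k) := by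
    intro k
    induction k with
    | zero => intro m g hg; simpa using hg
    | succ k IHk =>
      intro m g hg
      have h1 := hstep2 m g hg
      have h2 := IHk (m + 2) g h1
      have : m + 2 + 2 * k = m + 2 * (k + 1) := by ring
      rwa [this] at h2
  have hP3 : ∀ n : ℕ, 1 ≤ n → ∃ g ∈ S ^ n, b g ≠ 0 := by
    intro n hn
    by_contra hcon
    push_neg at hcon
    -- b vanishes on S^(j*n) for every j
    have hz : ∀ j : ℕ, ∀ g ∈ S ^ (j * n), b g = 0 := by
      intro j
      induction j with
      | zero =>
        intro g hg
        rw [zero_mul, pow_zero, Set.mem_one] at hg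
        rw [hg]; exact hb1
      | succ j IHj =>
        intro g hg
        rw [Nat.succ_mul, pow_add] at hg
        obtain ⟨x, hx, y, hy, rfl⟩ := Set.mem_mul.1 hg
        rw [hcoc, IHj x hx, hcon y hy, map_zero, add_zero]
    -- b vanishes on even powers of S
    have hev : ∀ m : ℕ, Even m → ∀ g ∈ S ^ m, b g = 0 := by
      intro m hm g hg
      obtain ⟨r, hr⟩ := hm
      have hrm : r ≤ m * n := by
        calc r ≤ m := by omega
          _ ≤ m * n := Nat.le_mul_of_pos_right m hn
      have harith : m + 2 * (m * n - r) = 2 * m * n := by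
        have h2mn : 2 * m * n = 2 * (m * n) := by ring
        omega
      have hmem2 : g ∈ S ^ (2 * m * n) := by
        have := hup2 (m * n - r) m g hg
        rwa [harith] at this
      have h2mn' : 2 * m * n = (2 * m) * n := by ring
      exact hz (2 * m) g (by rwa [h2mn'] at hmem2)
    -- hence b is globally bounded
    obtain ⟨Kb, hKb⟩ := hScpt.exists_bound_of_continuousOn hb.norm.continuousOn
    have hKb' : ∀ s ∈ S, ‖b s‖ ≤ max Kb 0 := by
      intro s hs
      have := hKb s hs
      rw [Real.norm_eq_abs] at this
      exact le_trans (le_abs_self _) (le_max_of_le_left this)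
    have hbound : ∀ g : G, ‖b g‖ ≤ max Kb 0 := by
      intro g
      obtain ⟨m, hm⟩ := hSgen g
      rcases Nat.even_or_odd m with he | ho
      · rw [hev m he g hm, norm_zero]
        exact le_max_right _ _
      · have hgs : g * s₀ ∈ S ^ (m + 1) := by
          rw [pow_succ]
          exact Set.mul_mem_mul hm hs₀
        have hz2 : b (g * s₀) = 0 := hev (m + 1) (Odd.add_one ho) _ hgs
        rw [hcoc] at hz2
        have : b g = -((π g) (b s₀)) := by
          rw [eq_neg_iff_add_eq_zero]; exact hz2
        rw [this, norm_neg, (π g).norm_map]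
        exact hKb' s₀ hs₀
    -- so bh is globally bounded, contradicting linear growth of its p-energy
    have hbhbound : ∀ g : G, ‖bh g‖ ≤ max Kb 0 + M :=
      fun g => le_trans (hbhB g) (by linarith [hbound g])
    have hBnn : (0:ℝ) ≤ max Kb 0 + M := by
      have := le_max_right Kb 0; linarith
    have hFbd : ∀ m : ℕ, 1 ≤ m →
        ∫ g, ‖bh g‖ ^ p ∂(convPow μ m) ≤ (max Kb 0 + M) ^ p := by
      intro m hm
      haveI := hPν m
      have h1 : ∫ g, ‖bh g‖ ^ p ∂(convPow μ m)
          ≤ ∫ _, (max Kb 0 + M) ^ p ∂(convPow μ m) := by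
        refine integral_mono ((hFall m hm).1) (integrable_const _) ?_
        intro g
        exact Real.rpow_le_rpow (norm_nonneg _) (hbhbound g) hp0.le
      rw [integral_const] at h1
      simpa [measure_univ] using h1
    have hcF : (0:ℝ) < c * ∫ g, ‖bh g‖ ^ p ∂μ := mul_pos hc hpos
    obtain ⟨m, hm⟩ := exists_nat_gt ((max Kb 0 + M) ^ p / (c * ∫ g, ‖bh g‖ ^ p ∂μ))
    have hm1 : 1 ≤ m := by
      by_contra hm0
      push_neg at hm0
      interval_cases m
      have : (0:ℝ) ≤ (max Kb 0 + M) ^ p / (c * ∫ g, ‖bh g‖ ^ p ∂μ) :=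
        div_nonneg (Real.rpow_nonneg hBnn p) hcF.le
      norm_num at hm
      linarith
    have h1 := (hFall m hm1).2
    have h2 := hFbd m hm1
    rw [div_lt_iff₀ hcF] at hm
    linarith
  -- positivity of the L^p integrals of b
  have hXpos : ∀ n : ℕ, 1 ≤ n → 0 < ∫ g, ‖b g‖ ^ p ∂(convPow μ n) := by
    intro n hn
    rcases lt_or_eq_of_le (integral_nonneg (μ := convPow μ n)
      (f := fun g => ‖b g‖ ^ p) (fun g => Real.rpow_nonneg (norm_nonneg _) p))
      with h | h
    · exact h
    exfalso
    have h0 : (fun g => ‖b g‖ ^ p) =ᵐ[convPow μ n] 0 :=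
      (integral_eq_zero_iff_of_nonneg (fun g => Real.rpow_nonneg (norm_nonneg _) p)
        (hbp_int n hn)).1 h.symm
    obtain ⟨g0, hg0S, hg0⟩ := hP3 n hn
    have hUopen : IsOpen {g : G | b g ≠ 0} := by
      have : {g : G | b g ≠ 0} = b ⁻¹' ({0}ᶜ) := rfl
      rw [this]
      exact (isClosed_singleton.isOpen_compl).preimage hb
    have hUpos := hP1 n hn _ hUopen ⟨g0, hg0, hg0S⟩
    have hUnull : convPow μ n {g : G | b g ≠ 0} = 0 := by
      refine measure_mono_null (fun g hg => ?_) (ae_iff.1 h0)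
      simp only [Set.mem_setOf_eq, Pi.zero_apply]
      exact (Real.rpow_pos_of_pos (norm_pos_iff.2 hg) p).ne'
    exact absurd hUnull hUpos.ne'
  -- final assembly
  have h2p : (0:ℝ) < 2 ^ p := Real.rpow_pos_of_pos two_pos p
  have hexp : (0:ℝ) ≤ 1 / p := one_div_nonneg.2 hp0.le
  have ha : (0:ℝ) < c * (∫ g, ‖bh g‖ ^ p ∂μ) / 2 ^ p := div_pos (mul_pos hc hpos) h2p
  have hlow' : ∀ n : ℕ, 1 ≤ n →
      (c * (∫ g, ‖bh g‖ ^ p ∂μ) / 2 ^ p) * n - M ^ p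
        ≤ ∫ g, ‖b g‖ ^ p ∂(convPow μ n) := by
    intro n hn
    have h1 := hlow n hn
    have heq : (n:ℝ) * (c * ∫ g, ‖bh g‖ ^ p ∂μ) / 2 ^ p
        = (c * (∫ g, ‖bh g‖ ^ p ∂μ) / 2 ^ p) * n := by ring
    linarith [h1, heq.ge, heq.le]
  set a : ℝ := c * (∫ g, ‖bh g‖ ^ p ∂μ) / 2 ^ p with hadef
  set N : ℕ := ⌈2 * M ^ p / a⌉₊ + 1 with hNdef
  have hN1 : 1 ≤ N := Nat.le_add_left 1 _
  have hNn : ∀ n : ℕ, N ≤ n → 2 * M ^ p ≤ a * n := by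
    intro n hn
    have h1 : 2 * M ^ p / a ≤ (⌈2 * M ^ p / a⌉₊ : ℝ) := Nat.le_ceil _
    have h2 : ((N : ℕ) : ℝ) ≤ (n:ℝ) := by exact_mod_cast hn
    have h3 : 2 * M ^ p / a ≤ (n : ℝ) := by
      rw [hNdef] at h2
      push_cast at h2
      linarith
    calc 2 * M ^ p = (2 * M ^ p / a) * a := (div_mul_cancel₀ _ ha.ne').symm
      _ ≤ (n : ℝ) * a := mul_le_mul_of_nonneg_right h3 ha.le
      _ = a * n := mul_comm _ _
  have hbig : ∀ n : ℕ, N ≤ n → (a / 2) ^ (1 / p) * (n:ℝ) ^ (1 / p)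
      ≤ (∫ g, ‖b g‖ ^ p ∂(convPow μ n)) ^ (1 / p) := by
    intro n hn
    have hn1 : 1 ≤ n := le_trans hN1 hn
    have h1 : a / 2 * n ≤ ∫ g, ‖b g‖ ^ p ∂(convPow μ n) := by
      have h2 := hlow' n hn1
      have h3 := hNn n hn
      linarith
    have h4 : (0:ℝ) ≤ a / 2 * n := mul_nonneg (by linarith) (Nat.cast_nonneg n)
    calc (a / 2) ^ (1 / p) * (n:ℝ) ^ (1 / p) = (a / 2 * n) ^ (1 / p) :=
        (Real.mul_rpow (by linarith) (Nat.cast_nonneg n)).symm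
      _ ≤ (∫ g, ‖b g‖ ^ p ∂(convPow μ n)) ^ (1 / p) :=
        Real.rpow_le_rpow h4 h1 hexp
  obtain ⟨l, hl0, hl⟩ : ∃ l : ℝ, 0 < l ∧ ∀ n : ℕ, 1 ≤ n →
      l * (n:ℝ) ^ (1 / p) ≤ (∫ g, ‖b g‖ ^ p ∂(convPow μ n)) ^ (1 / p) := by
    by_cases hNe : (Finset.Ico 1 N).Nonempty
    · have hm0 : 0 < (Finset.Ico 1 N).inf' hNe
          (fun k => (∫ g, ‖b g‖ ^ p ∂(convPow μ k)) ^ (1 / p)) := by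
        obtain ⟨k0, hk0, hkeq⟩ := Finset.exists_mem_eq_inf' hNe
          (fun k => (∫ g, ‖b g‖ ^ p ∂(convPow μ k)) ^ (1 / p))
        rw [hkeq]
        exact Real.rpow_pos_of_pos (hXpos k0 (Finset.mem_Ico.1 hk0).1) _
      have hNpos : (0:ℝ) < (N:ℝ) ^ (1 / p) :=
        Real.rpow_pos_of_pos (by exact_mod_cast hN1) _
      refine ⟨min ((a / 2) ^ (1 / p)) ((Finset.Ico 1 N).inf' hNe
          (fun k => (∫ g, ‖b g‖ ^ p ∂(convPow μ k)) ^ (1 / p)) / (N:ℝ) ^ (1 / p)),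
        lt_min (Real.rpow_pos_of_pos (by linarith) _) (div_pos hm0 hNpos), ?_⟩
      intro n hn
      rcases le_or_gt N n with hcase | hcase
      · exact le_trans (mul_le_mul_of_nonneg_right (min_le_left _ _)
          (Real.rpow_nonneg (Nat.cast_nonneg n) _)) (hbig n hcase)
      · have hmem : n ∈ Finset.Ico 1 N := Finset.mem_Ico.2 ⟨hn, hcase⟩
        have h1 : (Finset.Ico 1 N).inf' hNe
            (fun k => (∫ g, ‖b g‖ ^ p ∂(convPow μ k)) ^ (1 / p))
            ≤ (∫ g, ‖b g‖ ^ p ∂(convPow μ n)) ^ (1 / p) :=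
          Finset.inf'_le _ hmem
        have h2 : (n:ℝ) ^ (1 / p) ≤ (N:ℝ) ^ (1 / p) :=
          Real.rpow_le_rpow (Nat.cast_nonneg n) (by exact_mod_cast hcase.le) hexp
        calc min ((a / 2) ^ (1 / p)) ((Finset.Ico 1 N).inf' hNe
              (fun k => (∫ g, ‖b g‖ ^ p ∂(convPow μ k)) ^ (1 / p)) / (N:ℝ) ^ (1 / p))
              * (n:ℝ) ^ (1 / p)
            ≤ ((Finset.Ico 1 N).inf' hNe
              (fun k => (∫ g, ‖b g‖ ^ p ∂(convPow μ k)) ^ (1 / p)) / (N:ℝ) ^ (1 / p))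
              * (n:ℝ) ^ (1 / p) :=
            mul_le_mul_of_nonneg_right (min_le_right _ _)
              (Real.rpow_nonneg (Nat.cast_nonneg n) _)
          _ ≤ ((Finset.Ico 1 N).inf' hNe
              (fun k => (∫ g, ‖b g‖ ^ p ∂(convPow μ k)) ^ (1 / p)) / (N:ℝ) ^ (1 / p))
              * (N:ℝ) ^ (1 / p) :=
            mul_le_mul_of_nonneg_left h2 (div_nonneg hm0.le hNpos.le)
          _ = (Finset.Ico 1 N).inf' hNe
              (fun k => (∫ g, ‖b g‖ ^ p ∂(convPow μ k)) ^ (1 / p)) :=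
            div_mul_cancel₀ _ hNpos.ne'
          _ ≤ (∫ g, ‖b g‖ ^ p ∂(convPow μ n)) ^ (1 / p) := h1
    · refine ⟨(a / 2) ^ (1 / p), Real.rpow_pos_of_pos (by linarith) _, ?_⟩
      intro n hn
      have hNle : N ≤ n := by
        by_contra hcl
        push_neg at hcl
        exact hNe ⟨n, Finset.mem_Ico.2 ⟨hn, hcl⟩⟩
      exact hbig n hNle
  have hT1nn : (0:ℝ) ≤ ∫ g, ‖bh g‖ ^ 2 ∂μ :=
    integral_nonneg (fun g => pow_nonneg (norm_nonneg _) 2)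
  have hXnn : (0:ℝ) ≤ 2 * (d * ∫ g, ‖bh g‖ ^ 2 ∂μ) + 2 * M ^ 2 := by
    nlinarith only [hT1nn, hd.le, sq_nonneg M]
  have hupper : ∀ n : ℕ, 1 ≤ n →
      (∫ g, ‖b g‖ ^ 2 ∂(convPow μ n)) ^ ((1:ℝ) / 2)
        ≤ (2 * (d * ∫ g, ‖bh g‖ ^ 2 ∂μ) + 2 * M ^ 2) ^ ((1:ℝ) / 2)
          * (n:ℝ) ^ ((1:ℝ) / 2) := by
    intro n hn
    have h1 := hup n hn
    have hnn : (0:ℝ) ≤ ∫ g, ‖b g‖ ^ 2 ∂(convPow μ n) :=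
      integral_nonneg (fun g => pow_nonneg (norm_nonneg _) 2)
    calc (∫ g, ‖b g‖ ^ 2 ∂(convPow μ n)) ^ ((1:ℝ) / 2)
        ≤ ((n:ℝ) * (2 * (d * ∫ g, ‖bh g‖ ^ 2 ∂μ) + 2 * M ^ 2)) ^ ((1:ℝ) / 2) :=
          Real.rpow_le_rpow hnn h1 (by norm_num)
      _ = (2 * (d * ∫ g, ‖bh g‖ ^ 2 ∂μ) + 2 * M ^ 2) ^ ((1:ℝ) / 2)
          * (n:ℝ) ^ ((1:ℝ) / 2) := by
          rw [Real.mul_rpow (Nat.cast_nonneg n) hXnn, mul_comm]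
  refine ⟨max l⁻¹ ((2 * (d * ∫ g, ‖bh g‖ ^ 2 ∂μ) + 2 * M ^ 2) ^ ((1:ℝ) / 2)),
    lt_of_lt_of_le (inv_pos.2 hl0) (le_max_left _ _), ?_⟩
  intro n hn
  constructor
  · have hCinv : (max l⁻¹ ((2 * (d * ∫ g, ‖bh g‖ ^ 2 ∂μ) + 2 * M ^ 2) ^ ((1:ℝ) / 2)))⁻¹
        ≤ l := by
      exact inv_le_of_inv_le₀ hl0 (le_max_left _ _)
    calc (max l⁻¹ ((2 * (d * ∫ g, ‖bh g‖ ^ 2 ∂μ) + 2 * M ^ 2) ^ ((1:ℝ) / 2)))⁻¹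
          * (n:ℝ) ^ (1 / p)
        ≤ l * (n:ℝ) ^ (1 / p) :=
          mul_le_mul_of_nonneg_right hCinv (Real.rpow_nonneg (Nat.cast_nonneg n) _)
      _ ≤ (∫ g, ‖b g‖ ^ p ∂(convPow μ n)) ^ (1 / p) := hl n hn
  · calc (∫ g, ‖b g‖ ^ 2 ∂(convPow μ n)) ^ ((1:ℝ) / 2)
        ≤ (2 * (d * ∫ g, ‖bh g‖ ^ 2 ∂μ) + 2 * M ^ 2) ^ ((1:ℝ) / 2)
          * (n:ℝ) ^ ((1:ℝ) / 2) := hupper n hn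
      _ ≤ max l⁻¹ ((2 * (d * ∫ g, ‖bh g‖ ^ 2 ∂μ) + 2 * M ^ 2) ^ ((1:ℝ) / 2))
          * (n:ℝ) ^ ((1:ℝ) / 2) :=
          mul_le_mul_of_nonneg_right (le_max_right _ _)
            (Real.rpow_nonneg (Nat.cast_nonneg n) _)
end
end
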